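/- arXiv:2501.16598 — 2 statements merged into one kernel-verified Lean document; each statement's English description precedes it below -/
import Mathlib

section
/- Let E ⊂ ℝ^d be a nonempty compact set with 0 < |E| < 1 (|E| denoting the diameter of E), let m be an integer with 1 ≤ m ≤ d, and let t, ε > 0 satisfy t + ε < m. Let 0 < θ₁ < θ < 1 and 0 < r < 1 be such that |E| < r^{θ₁}. Suppose μ is a Borel probability measure supported on E and c > 0 is a constant such that μ(B(x,u)) ≤ c·u^{t+ε} for every x ∈ ℝ^d and every u ∈ [r, r^{θ₁}]. Then ∬ φ_{r,θ}^{t,m}(x−y) dμ(y) dμ(x) ≤ C·r^t, where C = 3·max{ c + c·t/ε , |E|^{−m} + c·m/(m−(t+ε)) }. -/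
open MeasureTheory Metric Set Filter Topology
open scoped ENNReal BigOperators

noncomputable section

/-- `S^s_{r,θ}(E)`: the infimum of `Σ_i |U_i|^s` over covers of `E` by sets `U_i`
with `r ≤ diam (U i) ≤ r ^ θ`.  (Any infinite such cover has infinite sum since each
term is at least `r ^ s > 0`, so it suffices to take the infimum over finite covers.) -/
def covSum (d : ℕ) (E : Set (EuclideanSpace ℝ (Fin d))) (θ r s : ℝ) : ℝ≥0∞ :=
  ⨅ (n : ℕ) (U : Fin n → Set (EuclideanSpace ℝ (Fin d))) (_ : E ⊆ ⋃ i, U i)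
    (_ : ∀ i, r ≤ diam (U i) ∧ diam (U i) ≤ r ^ θ),
    ∑ i, ENNReal.ofReal (diam (U i) ^ s)

/-- The function `r ↦ log S^s_{r,θ}(E) / (− log r)`. -/
def covRatio (d : ℕ) (E : Set (EuclideanSpace ℝ (Fin d))) (θ s r : ℝ) : ℝ :=
  Real.log (covSum d E θ r s).toReal / (- Real.log r)

/-- The lower `θ`-intermediate dimension: the unique `s ∈ [0,d]` with
`liminf_{r→0⁺} log S^s_{r,θ}(E)/(−log r) = 0`. -/
def lowerInterDim (d : ℕ) (θ : ℝ) (E : Set (EuclideanSpace ℝ (Fin d))) : ℝ :=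
  Classical.epsilon fun s : ℝ =>
    s ∈ Icc (0 : ℝ) d ∧ liminf (covRatio d E θ s) (𝓝[>] (0 : ℝ)) = 0

/-- The upper `θ`-intermediate dimension: the unique `s ∈ [0,d]` with
`limsup_{r→0⁺} log S^s_{r,θ}(E)/(−log r) = 0`. -/
def upperInterDim (d : ℕ) (θ : ℝ) (E : Set (EuclideanSpace ℝ (Fin d))) : ℝ :=
  Classical.epsilon fun s : ℝ =>
    s ∈ Icc (0 : ℝ) d ∧ limsup (covRatio d E θ s) (𝓝[>] (0 : ℝ)) = 0

/-- The lower quasi-Hausdorff dimension `lim_{θ→0⁺} dim_θ E`. -/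
def lowerQH (d : ℕ) (E : Set (EuclideanSpace ℝ (Fin d))) : ℝ :=
  Classical.epsilon fun L : ℝ =>
    Tendsto (fun θ => lowerInterDim d θ E) (𝓝[>] (0 : ℝ)) (𝓝 L)

/-- The upper quasi-Hausdorff dimension `lim_{θ→0⁺} dim̄_θ E`. -/
def upperQH (d : ℕ) (E : Set (EuclideanSpace ℝ (Fin d))) : ℝ :=
  Classical.epsilon fun L : ℝ =>
    Tendsto (fun θ => upperInterDim d θ E) (𝓝[>] (0 : ℝ)) (𝓝 L)

/-- The kernel `φ_{r,θ}^{s,t}`. -/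
def kerPhi (d : ℕ) (r θ s t : ℝ) (x : EuclideanSpace ℝ (Fin d)) : ℝ :=
  if ‖x‖ < r then 1
  else if ‖x‖ ≤ r ^ θ then (r / ‖x‖) ^ s
  else r ^ (θ * (t - s) + s) / ‖x‖ ^ t

/-- The capacity `C_{r,θ}^{s,t}(E)`: the reciprocal of the infimum over Borel probability
measures supported on `E` of the double integral of `φ_{r,θ}^{s,t}(x−y)`. -/
def capacity (d : ℕ) (E : Set (EuclideanSpace ℝ (Fin d))) (θ r s t : ℝ) : ℝ :=
  (sInf { I : ℝ | ∃ μ : Measure (EuclideanSpace ℝ (Fin d)),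
      IsProbabilityMeasure μ ∧ μ Eᶜ = 0 ∧
      I = ∫ x, ∫ y, kerPhi d r θ s t (x - y) ∂μ ∂μ })⁻¹

/-- The function `r ↦ log C_{r,θ}^{s,t}(E) / (− log r)`. -/
def capRatio (d : ℕ) (E : Set (EuclideanSpace ℝ (Fin d))) (θ s t r : ℝ) : ℝ :=
  Real.log (capacity d E θ r s t) / (- Real.log r)

/-- The lower `θ`-intermediate dimension profile `dim_θ^t E`: the unique `s ∈ [0,t]`
with `liminf_{r→0⁺} log C_{r,θ}^{s,t}(E)/(−log r) = s`. -/
def lowerProfile (d : ℕ) (θ t : ℝ) (E : Set (EuclideanSpace ℝ (Fin d))) : ℝ :=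
  Classical.epsilon fun s : ℝ =>
    s ∈ Icc (0 : ℝ) t ∧ liminf (capRatio d E θ s t) (𝓝[>] (0 : ℝ)) = s

/-- The upper `θ`-intermediate dimension profile `dim̄_θ^t E`: the unique `s ∈ [0,t]`
with `limsup_{r→0⁺} log C_{r,θ}^{s,t}(E)/(−log r) = s`. -/
def upperProfile (d : ℕ) (θ t : ℝ) (E : Set (EuclideanSpace ℝ (Fin d))) : ℝ :=
  Classical.epsilon fun s : ℝ =>
    s ∈ Icc (0 : ℝ) t ∧ limsup (capRatio d E θ s t) (𝓝[>] (0 : ℝ)) = s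

/-- `N_r(A)`: the smallest number of sets of diameter at most `r` needed to cover `A`. -/
def coverNumber (d : ℕ) (A : Set (EuclideanSpace ℝ (Fin d))) (r : ℝ) : ℝ≥0∞ :=
  ⨅ (n : ℕ) (U : Fin n → Set (EuclideanSpace ℝ (Fin d))) (_ : A ⊆ ⋃ i, U i)
    (_ : ∀ i, diam (U i) ≤ r), (n : ℝ≥0∞)

/-- The lower box dimension `liminf_{r→0⁺} log N_r(E)/(−log r)`. -/
def lowerBoxDim (d : ℕ) (E : Set (EuclideanSpace ℝ (Fin d))) : ℝ :=
  liminf (fun r : ℝ => Real.log ((coverNumber d E r).toReal) / (- Real.log r)) (𝓝[>] (0 : ℝ))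

/-- The upper box dimension `limsup_{r→0⁺} log N_r(E)/(−log r)`. -/
def upperBoxDim (d : ℕ) (E : Set (EuclideanSpace ℝ (Fin d))) : ℝ :=
  limsup (fun r : ℝ => Real.log ((coverNumber d E r).toReal) / (- Real.log r)) (𝓝[>] (0 : ℝ))

/-- The Assouad dimension. -/
def assouadDim (d : ℕ) (E : Set (EuclideanSpace ℝ (Fin d))) : ℝ :=
  sInf { s : ℝ | 0 ≤ s ∧ ∃ C : ℝ, 0 < C ∧ ∀ x ∈ E, ∀ r R : ℝ, 0 < r → r < R →
    coverNumber d (ball x R ∩ E) r ≤ ENNReal.ofReal (C * (R / r) ^ s) }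

/-- The upper Assouad spectrum `dim_A^α E`. -/
def assouadSpectrum (d : ℕ) (α : ℝ) (E : Set (EuclideanSpace ℝ (Fin d))) : ℝ :=
  sInf { t : ℝ | 0 ≤ t ∧ ∃ C : ℝ, 0 < C ∧ ∀ x ∈ E, ∀ r R : ℝ,
    0 < r → r ≤ R ^ (1 / α) → R ^ (1 / α) < R → R < 1 →
    coverNumber d (ball x R ∩ E) r ≤ ENNReal.ofReal (C * (R / r) ^ t) }

/-- The quasi-Assouad dimension `lim_{α→1⁻} dim_A^α E`. -/
def quasiAssouad (d : ℕ) (E : Set (EuclideanSpace ℝ (Fin d))) : ℝ :=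
  Classical.epsilon fun L : ℝ =>
    Tendsto (fun α => assouadSpectrum d α E) (𝓝[<] (1 : ℝ)) (𝓝 L)

set_option maxHeartbeats 2000000 in
/-- Kernel-energy estimate: under a Frostman-type condition on a probability
measure `μ` supported on `E`, the double integral of `φ_{r,θ}^{t,m}` is at most `C · r^t`. -/
theorem kernel_energy_bound {d m : ℕ} (E : Set (EuclideanSpace ℝ (Fin d)))
    (hE : E.Nonempty) (hEc : IsCompact E)
    (hdiam0 : 0 < diam E) (hdiam1 : diam E < 1)
    (hm1 : 1 ≤ m) (hmd : m ≤ d)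
    (t ε : ℝ) (ht : 0 < t) (hε : 0 < ε) (htε : t + ε < (m : ℝ))
    (θ θ₁ r : ℝ) (hθ₁0 : 0 < θ₁) (hθ₁θ : θ₁ < θ) (hθ1 : θ < 1)
    (hr0 : 0 < r) (hr1 : r < 1) (hEr : diam E < r ^ θ₁)
    (μ : Measure (EuclideanSpace ℝ (Fin d))) (hμ : IsProbabilityMeasure μ)
    (hμE : μ Eᶜ = 0)
    (c : ℝ) (hc : 0 < c)
    (hfrost : ∀ x : EuclideanSpace ℝ (Fin d), ∀ u ∈ Icc r (r ^ θ₁),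
      μ (ball x u) ≤ ENNReal.ofReal (c * u ^ (t + ε))) :
    ∫ x, ∫ y, kerPhi d r θ t (m : ℝ) (x - y) ∂μ ∂μ ≤
      (3 * max (c + c * t / ε)
        (diam E ^ (-(m : ℝ)) + c * (m : ℝ) / ((m : ℝ) - (t + ε)))) * r ^ t := by
  classical
  haveI := hμ
  have hθ0 : 0 < θ := hθ₁0.trans hθ₁θ
  have hm0 : (0:ℝ) < (m:ℝ) := by exact_mod_cast Nat.lt_of_lt_of_le Nat.zero_lt_one hm1
  have hp0 : 0 < t + ε := by linarith
  have hpm : t + ε < (m:ℝ) := htε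
  have htm : t < (m:ℝ) := by linarith
  set D := diam E with hDdef
  have hD0 : 0 < D := hdiam0
  set K := r ^ (θ * ((m:ℝ) - t) + t) with hKdef
  set l1 := r ^ (t * (1 - θ)) with hl1def
  set l0 := K / D ^ (m:ℝ) with hl0def
  have hK0 : 0 < K := Real.rpow_pos_of_pos hr0 _
  have hl1pos : 0 < l1 := Real.rpow_pos_of_pos hr0 _
  have hl11 : l1 ≤ 1 :=
    Real.rpow_le_one hr0.le hr1.le (mul_nonneg ht.le (by linarith))
  have hDm0 : 0 < D ^ (m:ℝ) := Real.rpow_pos_of_pos hD0 _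
  have hl0pos : 0 < l0 := div_pos hK0 hDm0
  have hKl1 : K / l1 = r ^ (θ * (m:ℝ)) := by
    rw [hKdef, hl1def, ← Real.rpow_sub hr0]
    congr 1; ring
  have hKl0 : K / l0 = D ^ (m:ℝ) := by
    rw [hl0def, div_div_eq_mul_div, mul_comm, mul_div_assoc, div_self hK0.ne', mul_one]
  have hrθ : r ≤ r ^ θ := by
    nth_rewrite 1 [← Real.rpow_one r]
    exact Real.rpow_le_rpow_of_exponent_ge hr0 hr1.le hθ1.le
  have hrθθ₁ : r ^ θ ≤ r ^ θ₁ := Real.rpow_le_rpow_of_exponent_ge hr0 hr1.le hθ₁θ.le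
  -- measurability and basic bounds on the kernel
  have hmeas_ker : Measurable (kerPhi d r θ t (m:ℝ)) := by
    unfold kerPhi
    apply Measurable.ite (measurableSet_lt measurable_norm measurable_const) measurable_const
    apply Measurable.ite (measurableSet_le measurable_norm measurable_const)
    · exact (Real.continuous_rpow_const ht.le).measurable.comp
        (measurable_const.div measurable_norm)
    · exact measurable_const.div
        ((Real.continuous_rpow_const hm0.le).measurable.comp measurable_norm)
  have hker_nonneg : ∀ z : EuclideanSpace ℝ (Fin d), 0 ≤ kerPhi d r θ t (m:ℝ) z := by
    intro z; unfold kerPhi; split_ifs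
    · norm_num
    · exact Real.rpow_nonneg (div_nonneg hr0.le (norm_nonneg _)) _
    · exact div_nonneg (Real.rpow_nonneg hr0.le _) (Real.rpow_nonneg (norm_nonneg _) _)
  have hker_le_one : ∀ z : EuclideanSpace ℝ (Fin d), kerPhi d r θ t (m:ℝ) z ≤ 1 := by
    intro z; unfold kerPhi; split_ifs with h1 h2
    · exact le_refl _
    · exact Real.rpow_le_one (div_nonneg hr0.le (norm_nonneg _))
        (div_le_one_of_le₀ (not_lt.mp h1) (norm_nonneg _)) ht.le
    · rw [← hKdef]
      have hz : r ^ θ < ‖z‖ := not_le.mp h2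
      have h3 : r ^ (θ * (m:ℝ)) ≤ ‖z‖ ^ (m:ℝ) := by
        calc r ^ (θ * (m:ℝ)) = (r ^ θ) ^ (m:ℝ) := Real.rpow_mul hr0.le _ _
        _ ≤ ‖z‖ ^ (m:ℝ) := Real.rpow_le_rpow (Real.rpow_nonneg hr0.le _) hz.le hm0.le
      have h4 : K ≤ r ^ (θ * (m:ℝ)) := by
        apply Real.rpow_le_rpow_of_exponent_ge hr0 hr1.le
        have h5 : θ * t ≤ 1 * t := mul_le_mul_of_nonneg_right hθ1.le ht.le
        linarith
      exact div_le_one_of_le₀ (h4.trans h3) (Real.rpow_nonneg (norm_nonneg _) _)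
  -- Claim A : for l1 < l ≤ 1, the superlevel set is inside a small ball
  have claimA : ∀ x : EuclideanSpace ℝ (Fin d), ∀ l : ℝ, l1 < l → l ≤ 1 →
      μ {y : EuclideanSpace ℝ (Fin d) | l < kerPhi d r θ t (m:ℝ) (x - y)} ≤
        ENNReal.ofReal (c * r ^ (t + ε) * l ^ (-((t + ε) / t))) := by
    intro x l hl1l hle1
    have hlpos : 0 < l := hl1pos.trans hl1l
    set ra := r * l ^ (-t⁻¹) with hradef
    have hrra : r ≤ ra := by
      rw [hradef]
      nth_rewrite 1 [← mul_one r]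
      exact mul_le_mul_of_nonneg_left
        (Real.one_le_rpow_of_pos_of_le_one_of_nonpos hlpos hle1
          (neg_nonpos.mpr (inv_nonneg.mpr ht.le))) hr0.le
    have hraθ : ra ≤ r ^ θ₁ := by
      have h1 : l ^ (-t⁻¹) < l1 ^ (-t⁻¹) := by
        rw [Real.rpow_neg hlpos.le, Real.rpow_neg hl1pos.le]
        exact inv_strictAnti₀ (Real.rpow_pos_of_pos hl1pos _)
          (Real.rpow_lt_rpow hl1pos.le hl1l (inv_pos.mpr ht))
      have h2 : l1 ^ (-t⁻¹) = r ^ (θ - 1) := by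
        rw [hl1def, ← Real.rpow_mul hr0.le]
        congr 1; field_simp; ring
      have h3 : ra < r ^ θ := by
        calc ra < r * r ^ (θ - 1) := by
              rw [hradef, ← h2]; exact mul_lt_mul_of_pos_left h1 hr0
        _ = r ^ θ := by
              nth_rewrite 1 [← Real.rpow_one r]
              rw [← Real.rpow_add hr0]; congr 1; ring
      exact h3.le.trans hrθθ₁
    have hsub : {y : EuclideanSpace ℝ (Fin d) | l < kerPhi d r θ t (m:ℝ) (x - y)} ⊆
        ball x ra := by
      intro y hy
      simp only [mem_setOf_eq] at hy
      rw [mem_ball, dist_eq_norm, norm_sub_rev]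
      set z := x - y with hzdef
      unfold kerPhi at hy
      split_ifs at hy with h1 h2
      · exact lt_of_lt_of_le h1 hrra
      · have hz0 : 0 < ‖z‖ := lt_of_lt_of_le hr0 (not_lt.mp h1)
        have h4 : l ^ t⁻¹ < r / ‖z‖ := by
          have h5 := Real.rpow_lt_rpow hlpos.le hy (inv_pos.mpr ht)
          rwa [← Real.rpow_mul (div_nonneg hr0.le (norm_nonneg z)),
            mul_inv_cancel₀ ht.ne', Real.rpow_one] at h5
        have h5 : ‖z‖ * l ^ t⁻¹ < r := by
          have h6 := (lt_div_iff₀ hz0).mp h4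
          linarith [mul_comm (l ^ t⁻¹) ‖z‖]
        rw [hradef, Real.rpow_neg hlpos.le, ← div_eq_mul_inv]
        exact (lt_div_iff₀ (Real.rpow_pos_of_pos hlpos _)).mpr h5
      · exfalso
        rw [← hKdef] at hy
        have hzθ : r ^ θ < ‖z‖ := not_le.mp h2
        have h6 : (r ^ θ) ^ (m:ℝ) < ‖z‖ ^ (m:ℝ) :=
          Real.rpow_lt_rpow (Real.rpow_nonneg hr0.le _) hzθ hm0
        have h7 : K / ‖z‖ ^ (m:ℝ) < K / (r ^ θ) ^ (m:ℝ) :=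
          div_lt_div_of_pos_left hK0 (Real.rpow_pos_of_pos (Real.rpow_pos_of_pos hr0 _) _) h6
        have h8 : K / (r ^ θ) ^ (m:ℝ) = l1 := by
          rw [← Real.rpow_mul hr0.le, hKdef, hl1def, ← Real.rpow_sub hr0]
          congr 1; ring
        rw [h8] at h7
        linarith
    calc μ {y : EuclideanSpace ℝ (Fin d) | l < kerPhi d r θ t (m:ℝ) (x - y)}
        ≤ μ (ball x ra) := measure_mono hsub
      _ ≤ ENNReal.ofReal (c * ra ^ (t + ε)) := hfrost x ra ⟨hrra, hraθ⟩
      _ = ENNReal.ofReal (c * r ^ (t + ε) * l ^ (-((t + ε) / t))) := by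
          congr 1
          rw [hradef, Real.mul_rpow hr0.le (Real.rpow_nonneg hlpos.le _),
            ← Real.rpow_mul hlpos.le,
            show -t⁻¹ * (t + ε) = -((t + ε) / t) by rw [div_eq_mul_inv]; ring]
          ring
  -- Claim B : for l0 < l ≤ l1
  have claimB : ∀ x : EuclideanSpace ℝ (Fin d), ∀ l : ℝ, l0 < l → l ≤ l1 →
      μ {y : EuclideanSpace ℝ (Fin d) | l < kerPhi d r θ t (m:ℝ) (x - y)} ≤
        ENNReal.ofReal (c * K ^ ((t + ε) / (m:ℝ)) * l ^ (-((t + ε) / (m:ℝ)))) := by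
    intro x l hl0l hll1
    have hlpos : 0 < l := hl0pos.trans hl0l
    set ρ := (K / l) ^ ((m:ℝ)⁻¹) with hρdef
    have hKl_pos : 0 < K / l := div_pos hK0 hlpos
    have hρpos : 0 < ρ := Real.rpow_pos_of_pos hKl_pos _
    have hρθ : r ^ θ ≤ ρ := by
      have h1 : K / l1 ≤ K / l := div_le_div_of_nonneg_left hK0.le hlpos hll1
      rw [hKl1] at h1
      calc r ^ θ = (r ^ (θ * (m:ℝ))) ^ ((m:ℝ)⁻¹) := by
            rw [← Real.rpow_mul hr0.le, mul_assoc, mul_inv_cancel₀ hm0.ne', mul_one]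
        _ ≤ ρ := Real.rpow_le_rpow (Real.rpow_nonneg hr0.le _) h1 (inv_nonneg.mpr hm0.le)
    have hρr : r ≤ ρ := hrθ.trans hρθ
    have hρD : ρ < D := by
      have h1 : K / l < K / l0 := div_lt_div_of_pos_left hK0 hl0pos hl0l
      rw [hKl0] at h1
      calc ρ < (D ^ (m:ℝ)) ^ ((m:ℝ)⁻¹) :=
            Real.rpow_lt_rpow hKl_pos.le h1 (inv_pos.mpr hm0)
        _ = D := by rw [← Real.rpow_mul hD0.le, mul_inv_cancel₀ hm0.ne', Real.rpow_one]
    have hρθ₁ : ρ ≤ r ^ θ₁ := (hρD.trans hEr).le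
    have hsub : {y : EuclideanSpace ℝ (Fin d) | l < kerPhi d r θ t (m:ℝ) (x - y)} ⊆
        ball x ρ := by
      intro y hy
      simp only [mem_setOf_eq] at hy
      rw [mem_ball, dist_eq_norm, norm_sub_rev]
      set z := x - y with hzdef
      unfold kerPhi at hy
      split_ifs at hy with h1 h2
      · exact lt_of_lt_of_le h1 hρr
      · rcases lt_or_eq_of_le h2 with hlt | heq
        · exact lt_of_lt_of_le hlt hρθ
        · have hll1' : l < l1 := by
            have hrrθ : r / ‖z‖ = r ^ (1 - θ) := by
              rw [heq, Real.rpow_sub hr0, Real.rpow_one]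
            rw [hrrθ, ← Real.rpow_mul hr0.le] at hy
            calc l < r ^ ((1 - θ) * t) := hy
              _ = l1 := by rw [hl1def]; congr 1; ring
          have h3 : K / l1 < K / l := div_lt_div_of_pos_left hK0 hlpos hll1'
          rw [hKl1] at h3
          have h4 : (r ^ (θ * (m:ℝ))) ^ ((m:ℝ)⁻¹) < ρ :=
            Real.rpow_lt_rpow (Real.rpow_nonneg hr0.le _) h3 (inv_pos.mpr hm0)
          have h5 : (r ^ (θ * (m:ℝ))) ^ ((m:ℝ)⁻¹) = r ^ θ := by
            rw [← Real.rpow_mul hr0.le, mul_assoc, mul_inv_cancel₀ hm0.ne', mul_one]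
          rw [h5] at h4
          rw [heq]; exact h4
      · rw [← hKdef] at hy
        have hz0 : 0 < ‖z‖ := (Real.rpow_pos_of_pos hr0 θ).trans (not_le.mp h2)
        have hzm : 0 < ‖z‖ ^ (m:ℝ) := Real.rpow_pos_of_pos hz0 _
        have h3 : ‖z‖ ^ (m:ℝ) < K / l := by
          rw [lt_div_iff₀ hlpos]
          have h6 := (lt_div_iff₀ hzm).mp hy
          linarith [mul_comm l (‖z‖ ^ (m:ℝ))]
        calc ‖z‖ = (‖z‖ ^ (m:ℝ)) ^ ((m:ℝ)⁻¹) := by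
              rw [← Real.rpow_mul (norm_nonneg z), mul_inv_cancel₀ hm0.ne', Real.rpow_one]
          _ < ρ := Real.rpow_lt_rpow hzm.le h3 (inv_pos.mpr hm0)
    calc μ {y : EuclideanSpace ℝ (Fin d) | l < kerPhi d r θ t (m:ℝ) (x - y)}
        ≤ μ (ball x ρ) := measure_mono hsub
      _ ≤ ENNReal.ofReal (c * ρ ^ (t + ε)) := hfrost x ρ ⟨hρr, hρθ₁⟩
      _ = ENNReal.ofReal (c * K ^ ((t + ε) / (m:ℝ)) * l ^ (-((t + ε) / (m:ℝ)))) := by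
          congr 1
          rw [hρdef, ← Real.rpow_mul hKl_pos.le,
            show (m:ℝ)⁻¹ * (t + ε) = (t + ε) / (m:ℝ) by rw [div_eq_mul_inv]; ring,
            Real.div_rpow hK0.le hlpos.le, div_eq_mul_inv, ← Real.rpow_neg hlpos.le]
          ring
  -- the three numeric pieces
  set u1 := D ^ (-(m:ℝ)) * r ^ t with hu1
  set u2 := c * (m:ℝ) / ((m:ℝ) - (t + ε)) * r ^ t with hu2
  set u3 := c * t / ε * r ^ t with hu3
  have hrt : 0 < r ^ t := Real.rpow_pos_of_pos hr0 t
  have hu1p : 0 ≤ u1 := mul_nonneg (Real.rpow_nonneg hD0.le _) hrt.le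
  have hu2p : 0 ≤ u2 := mul_nonneg (div_nonneg (by positivity) (by linarith)) hrt.le
  have hu3p : 0 ≤ u3 := mul_nonneg (div_nonneg (by positivity) hε.le) hrt.le
  -- the main lintegral estimate
  have key : ∀ x : EuclideanSpace ℝ (Fin d),
      ∫⁻ y, ENNReal.ofReal (kerPhi d r θ t (m:ℝ) (x - y)) ∂μ ≤
        ENNReal.ofReal (u1 + u2 + u3) := by
    intro x
    have hmz : AEMeasurable (fun y => kerPhi d r θ t (m:ℝ) (x - y)) μ :=
      (hmeas_ker.comp (measurable_const.sub measurable_id)).aemeasurable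
    rw [lintegral_eq_lintegral_meas_lt μ (ae_of_all _ fun y => hker_nonneg _) hmz]
    set F := fun l : ℝ =>
      μ {y : EuclideanSpace ℝ (Fin d) | l < kerPhi d r θ t (m:ℝ) (x - y)} with hFdef
    set A := min l0 1 with hAdef
    set B := min (max l0 l1) 1 with hBdef
    have hA0 : 0 < A := lt_min hl0pos one_pos
    have hAB : A ≤ B := min_le_min (le_max_left _ _) le_rfl
    have hB1 : B ≤ 1 := min_le_right _ _
    have hl1B : l1 ≤ B := le_min (le_max_right _ _) hl11
    have hsum : ((∫⁻ l in Ioc (0:ℝ) A, F l) + ∫⁻ l in Ioc A B, F l)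
          + ((∫⁻ l in Ioc B 1, F l) + ∫⁻ l in Ioi (1:ℝ), F l)
        = ∫⁻ l in Ioi (0:ℝ), F l := by
      rw [← lintegral_union measurableSet_Ioc (Ioc_disjoint_Ioc.mpr
            ((min_le_left A B).trans (le_max_right 0 A))),
        Ioc_union_Ioc_eq_Ioc hA0.le hAB,
        ← lintegral_union measurableSet_Ioi (Ioc_disjoint_Ioi le_rfl),
        Ioc_union_Ioi_eq_Ioi hB1,
        ← lintegral_union measurableSet_Ioi (Ioc_disjoint_Ioi le_rfl),
        Ioc_union_Ioi_eq_Ioi (hA0.le.trans hAB)]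
    have T1 : (∫⁻ l in Ioc (0:ℝ) A, F l) ≤ ENNReal.ofReal u1 := by
      calc (∫⁻ l in Ioc (0:ℝ) A, F l) ≤ ∫⁻ _ in Ioc (0:ℝ) A, (1:ℝ≥0∞) :=
            setLIntegral_mono measurable_const fun l _ => prob_le_one
        _ = ENNReal.ofReal A := by
            rw [setLIntegral_const, one_mul, Real.volume_Ioc, sub_zero]
        _ ≤ ENNReal.ofReal u1 := by
            apply ENNReal.ofReal_le_ofReal
            have hKrt : K ≤ r ^ t := by
              apply Real.rpow_le_rpow_of_exponent_ge hr0 hr1.le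
              have h5 : 0 ≤ θ * ((m:ℝ) - t) := mul_nonneg hθ0.le (by linarith)
              linarith
            calc A ≤ l0 := min_le_left _ _
              _ ≤ r ^ t / D ^ (m:ℝ) := by rw [hl0def]; gcongr
              _ = u1 := by rw [hu1, Real.rpow_neg hD0.le]; ring
    have hsubAB : Ioc A B ⊆ Ioc (0:ℝ) l1 := by
      intro l hl
      obtain ⟨hAl, hlB⟩ := hl
      refine ⟨hA0.trans hAl, ?_⟩
      by_contra hcon
      push_neg at hcon
      have hlmax : l ≤ max l0 l1 := hlB.trans (min_le_left _ _)
      have hle1 : l ≤ 1 := hlB.trans (min_le_right _ _)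
      have hll0 : l ≤ l0 := by
        rcases le_max_iff.mp hlmax with h | h
        · exact h
        · linarith
      have : l ≤ A := le_min hll0 hle1
      linarith
    have hdm : (t + ε) / (m:ℝ) < 1 := (div_lt_one hm0).mpr hpm
    have hT2exp : -1 < -((t + ε) / (m:ℝ)) := by linarith
    have hT2exp1 : 0 < -((t + ε) / (m:ℝ)) + 1 := by linarith
    have T2 : (∫⁻ l in Ioc A B, F l) ≤ ENNReal.ofReal u2 := by
      have hgm : Measurable fun l : ℝ =>
          ENNReal.ofReal (c * K ^ ((t + ε) / (m:ℝ)) * l ^ (-((t + ε) / (m:ℝ)))) := by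
        measurability
      have hint : IntegrableOn
          (fun l : ℝ => c * K ^ ((t + ε) / (m:ℝ)) * l ^ (-((t + ε) / (m:ℝ))))
          (Ioc (0:ℝ) l1) := by
        apply (intervalIntegrable_iff_integrableOn_Ioc_of_le hl1pos.le).mp
        exact (intervalIntegral.intervalIntegrable_rpow' hT2exp).const_mul _
      have hnn : 0 ≤ᵐ[volume.restrict (Ioc (0:ℝ) l1)]
          fun l : ℝ => c * K ^ ((t + ε) / (m:ℝ)) * l ^ (-((t + ε) / (m:ℝ))) := by
        filter_upwards [self_mem_ae_restrict measurableSet_Ioc] with l hl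
        exact mul_nonneg (mul_nonneg hc.le (Real.rpow_nonneg hK0.le _))
          (Real.rpow_nonneg hl.1.le _)
      have hval : (∫ l in Ioc (0:ℝ) l1,
          c * K ^ ((t + ε) / (m:ℝ)) * l ^ (-((t + ε) / (m:ℝ)))) ≤ u2 := by
        rw [← intervalIntegral.integral_of_le hl1pos.le,
          intervalIntegral.integral_const_mul,
          integral_rpow (Or.inl hT2exp),
          Real.zero_rpow hT2exp1.ne', sub_zero]
        have hexp : K ^ ((t + ε) / (m:ℝ)) * l1 ^ (-((t + ε) / (m:ℝ)) + 1) ≤ r ^ t := by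
          rw [hKdef, hl1def, ← Real.rpow_mul hr0.le, ← Real.rpow_mul hr0.le,
            ← Real.rpow_add hr0]
          apply Real.rpow_le_rpow_of_exponent_ge hr0 hr1.le
          have hid : (θ * ((m:ℝ) - t) + t) * ((t + ε) / (m:ℝ))
              + t * (1 - θ) * (-((t + ε) / (m:ℝ)) + 1) = t + θ * ε := by
            field_simp
            ring
          rw [hid]
          have h5 : 0 ≤ θ * ε := mul_nonneg hθ0.le hε.le
          linarith
        have hmε : (m:ℝ) - (t + ε) ≠ 0 := by linarith
        calc c * K ^ ((t + ε) / (m:ℝ)) * (l1 ^ (-((t + ε) / (m:ℝ)) + 1)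
              / (-((t + ε) / (m:ℝ)) + 1))
            = c * (K ^ ((t + ε) / (m:ℝ)) * l1 ^ (-((t + ε) / (m:ℝ)) + 1))
              / (-((t + ε) / (m:ℝ)) + 1) := by ring
          _ ≤ c * r ^ t / (-((t + ε) / (m:ℝ)) + 1) := by gcongr
          _ = u2 := by
              have hq : -((t + ε) / (m:ℝ)) + 1 = ((m:ℝ) - (t + ε)) / (m:ℝ) := by
                field_simp [hm0.ne']
                ring
              rw [hu2, hq, div_div_eq_mul_div]
              ring
      calc (∫⁻ l in Ioc A B, F l)
          ≤ ∫⁻ l in Ioc A B,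
              ENNReal.ofReal (c * K ^ ((t + ε) / (m:ℝ)) * l ^ (-((t + ε) / (m:ℝ)))) := by
            apply setLIntegral_mono hgm
            intro l hl
            have hmem := hsubAB hl
            have hl0l : l0 < l := by
              rcases lt_or_ge l0 1 with h | h
              · have hA : A = l0 := min_eq_left h.le
                rw [hA] at hl
                exact hl.1
              · exfalso
                have hA : A = 1 := min_eq_right h
                have h1 := hl.1
                rw [hA] at h1
                linarith [hl.2.trans hB1]
            exact claimB x l hl0l hmem.2
        _ ≤ ∫⁻ l in Ioc (0:ℝ) l1,
              ENNReal.ofReal (c * K ^ ((t + ε) / (m:ℝ)) * l ^ (-((t + ε) / (m:ℝ)))) :=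
            lintegral_mono_set hsubAB
        _ = ENNReal.ofReal (∫ l in Ioc (0:ℝ) l1,
              c * K ^ ((t + ε) / (m:ℝ)) * l ^ (-((t + ε) / (m:ℝ)))) :=
            (ofReal_integral_eq_lintegral_ofReal hint hnn).symm
        _ ≤ ENNReal.ofReal u2 := ENNReal.ofReal_le_ofReal hval
    have T3 : (∫⁻ l in Ioc B 1, F l) ≤ ENNReal.ofReal u3 := by
      have hgm : Measurable fun l : ℝ =>
          ENNReal.ofReal (c * r ^ (t + ε) * l ^ (-((t + ε) / t))) := by
        measurability
      have hBsub : Ioc B (1:ℝ) ⊆ Ioc l1 1 := Ioc_subset_Ioc_left hl1B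
      have h0mem : (0:ℝ) ∉ uIcc l1 1 := notMem_uIcc_of_lt hl1pos one_pos
      have hne3 : -((t + ε) / t) ≠ -1 := by
        have : 1 < (t + ε) / t := (one_lt_div ht).mpr (by linarith)
        intro hcon
        rw [neg_inj] at hcon
        linarith [hcon ▸ this]
      have hint : IntegrableOn
          (fun l : ℝ => c * r ^ (t + ε) * l ^ (-((t + ε) / t))) (Ioc l1 1) := by
        apply (intervalIntegrable_iff_integrableOn_Ioc_of_le hl11).mp
        exact (intervalIntegral.intervalIntegrable_rpow (Or.inr h0mem)).const_mul _
      have hnn : 0 ≤ᵐ[volume.restrict (Ioc l1 (1:ℝ))]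
          fun l : ℝ => c * r ^ (t + ε) * l ^ (-((t + ε) / t)) := by
        filter_upwards [self_mem_ae_restrict measurableSet_Ioc] with l hl
        exact mul_nonneg (mul_nonneg hc.le (Real.rpow_nonneg hr0.le _))
          (Real.rpow_nonneg (hl1pos.trans hl.1).le _)
      have hval : (∫ l in Ioc l1 (1:ℝ),
          c * r ^ (t + ε) * l ^ (-((t + ε) / t))) ≤ u3 := by
        rw [← intervalIntegral.integral_of_le hl11,
          intervalIntegral.integral_const_mul,
          integral_rpow (Or.inr ⟨hne3, h0mem⟩), Real.one_rpow]
        set L := l1 ^ (-((t + ε) / t) + 1) with hLdef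
        have hLval : L = r ^ (-(ε * (1 - θ))) := by
          rw [hLdef, hl1def, ← Real.rpow_mul hr0.le]
          congr 1
          field_simp
          ring
        have hLpos : 0 < L := by rw [hLval]; exact Real.rpow_pos_of_pos hr0 _
        have hE3ne : -((t + ε) / t) + 1 ≠ 0 := by
          have h9 : -((t + ε) / t) + 1 = -(ε / t) := by field_simp; ring
          rw [h9]
          exact neg_ne_zero.mpr (div_ne_zero hε.ne' ht.ne')
        have hfrac : (1 - L) / (-((t + ε) / t) + 1) = (L - 1) * (t / ε) := by
          rw [show -((t + ε) / t) + 1 = -(ε / t) by field_simp; ring, div_neg,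
            div_div_eq_mul_div]
          ring
        rw [hfrac]
        have hL1 : r ^ (t + ε) * L ≤ r ^ t := by
          rw [hLval, ← Real.rpow_add hr0]
          apply Real.rpow_le_rpow_of_exponent_ge hr0 hr1.le
          have h5 : ε * (1 - θ) ≤ ε * 1 := mul_le_mul_of_nonneg_left (by linarith) hε.le
          linarith
        have h7 : (L - 1) * (t / ε) ≤ L * (t / ε) :=
          mul_le_mul_of_nonneg_right (by linarith) (by positivity)
        calc c * r ^ (t + ε) * ((L - 1) * (t / ε))
            ≤ c * r ^ (t + ε) * (L * (t / ε)) :=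
              mul_le_mul_of_nonneg_left h7 (by positivity)
          _ = c * (t / ε) * (r ^ (t + ε) * L) := by ring
          _ ≤ c * (t / ε) * r ^ t := mul_le_mul_of_nonneg_left hL1 (by positivity)
          _ = u3 := by rw [hu3]; ring
      calc (∫⁻ l in Ioc B 1, F l)
          ≤ ∫⁻ l in Ioc B 1,
              ENNReal.ofReal (c * r ^ (t + ε) * l ^ (-((t + ε) / t))) := by
            apply setLIntegral_mono hgm
            intro l hl
            exact claimA x l (lt_of_le_of_lt hl1B hl.1) hl.2
        _ ≤ ∫⁻ l in Ioc l1 1,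
              ENNReal.ofReal (c * r ^ (t + ε) * l ^ (-((t + ε) / t))) :=
            lintegral_mono_set hBsub
        _ = ENNReal.ofReal (∫ l in Ioc l1 (1:ℝ),
              c * r ^ (t + ε) * l ^ (-((t + ε) / t))) :=
            (ofReal_integral_eq_lintegral_ofReal hint hnn).symm
        _ ≤ ENNReal.ofReal u3 := ENNReal.ofReal_le_ofReal hval
    have T4 : (∫⁻ l in Ioi (1:ℝ), F l) ≤ 0 := by
      have h0 : ∀ l ∈ Ioi (1:ℝ), F l ≤ 0 := by
        intro l hl
        have hempty : {y : EuclideanSpace ℝ (Fin d) | l < kerPhi d r θ t (m:ℝ) (x - y)}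
            = ∅ := by
          apply eq_empty_iff_forall_notMem.mpr
          intro y hy
          simp only [mem_setOf_eq] at hy
          have h1 := hker_le_one (x - y)
          have h2 : (1:ℝ) < l := hl
          linarith
        rw [hFdef]
        simp only [hempty, measure_empty, le_refl]
      calc (∫⁻ l in Ioi (1:ℝ), F l) ≤ ∫⁻ _ in Ioi (1:ℝ), (0:ℝ≥0∞) :=
            setLIntegral_mono measurable_const h0
        _ = 0 := by simp
    have main : ((∫⁻ l in Ioc (0:ℝ) A, F l) + ∫⁻ l in Ioc A B, F l)
          + ((∫⁻ l in Ioc B 1, F l) + ∫⁻ l in Ioi (1:ℝ), F l)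
        ≤ ENNReal.ofReal (u1 + u2 + u3) := by
      calc ((∫⁻ l in Ioc (0:ℝ) A, F l) + ∫⁻ l in Ioc A B, F l)
            + ((∫⁻ l in Ioc B 1, F l) + ∫⁻ l in Ioi (1:ℝ), F l)
          ≤ (ENNReal.ofReal u1 + ENNReal.ofReal u2) + (ENNReal.ofReal u3 + 0) :=
            add_le_add (add_le_add T1 T2) (add_le_add T3 T4)
        _ = ENNReal.ofReal (u1 + u2 + u3) := by
            rw [add_zero, ← ENNReal.ofReal_add hu1p hu2p,
              ← ENNReal.ofReal_add (add_nonneg hu1p hu2p) hu3p]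
    rw [hsum] at main
    exact main
  -- from the lintegral bound to the Bochner integral bound
  have hker_meas2 : ∀ x : EuclideanSpace ℝ (Fin d),
      Measurable fun y => kerPhi d r θ t (m:ℝ) (x - y) :=
    fun x => hmeas_ker.comp (measurable_const.sub measurable_id)
  have hCr0 : 0 ≤ u1 + u2 + u3 := by linarith
  have hinner : ∀ x : EuclideanSpace ℝ (Fin d),
      ∫ y, kerPhi d r θ t (m:ℝ) (x - y) ∂μ ≤ u1 + u2 + u3 := by
    intro x
    rw [integral_eq_lintegral_of_nonneg_ae (ae_of_all _ fun y => hker_nonneg _)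
      (hker_meas2 x).aestronglyMeasurable]
    exact ENNReal.toReal_le_of_le_ofReal hCr0 (key x)
  have houter : ‖∫ x, (∫ y, kerPhi d r θ t (m:ℝ) (x - y) ∂μ) ∂μ‖
      ≤ (u1 + u2 + u3) * (μ univ).toReal :=
    norm_integral_le_of_norm_le_const (ae_of_all _ fun x => by
      rw [Real.norm_eq_abs, abs_of_nonneg (integral_nonneg fun y => hker_nonneg _)]
      exact hinner x)
  rw [measure_univ, ENNReal.toReal_one, mul_one] at houter
  have hfin : ∫ x, (∫ y, kerPhi d r θ t (m:ℝ) (x - y) ∂μ) ∂μ ≤ u1 + u2 + u3 :=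
    (le_abs_self _).trans (by rw [← Real.norm_eq_abs]; exact houter)
  refine hfin.trans ?_
  set M := max (c + c * t / ε) (D ^ (-(m:ℝ)) + c * (m:ℝ) / ((m:ℝ) - (t + ε))) with hM
  have hM1 : c * t / ε ≤ M := by
    refine le_trans ?_ (le_max_left _ _)
    have : 0 ≤ c := hc.le
    linarith
  have hM2 : D ^ (-(m:ℝ)) + c * (m:ℝ) / ((m:ℝ) - (t + ε)) ≤ M := le_max_right _ _
  have hM0 : 0 < M := lt_of_lt_of_le (by positivity) (le_max_left _ _)
  have h1 : u1 + u2 ≤ M * r ^ t := by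
    rw [hu1, hu2]
    calc D ^ (-(m:ℝ)) * r ^ t + c * (m:ℝ) / ((m:ℝ) - (t + ε)) * r ^ t
        = (D ^ (-(m:ℝ)) + c * (m:ℝ) / ((m:ℝ) - (t + ε))) * r ^ t := by ring
      _ ≤ M * r ^ t := mul_le_mul_of_nonneg_right hM2 hrt.le
  have h2 : u3 ≤ M * r ^ t := by
    rw [hu3]
    exact mul_le_mul_of_nonneg_right hM1 hrt.le
  have h3 : 0 < M * r ^ t := mul_pos hM0 hrt
  calc u1 + u2 + u3 ≤ M * r ^ t + M * r ^ t := by linarith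
    _ ≤ 3 * M * r ^ t := by linarith
end
end

section
/- Let E ⊂ ℝ^d be a nonempty compact set and let θ ∈ (0,1]. Then the functions f, g : (0,d) → [0,d] defined by f(t) = dim_θ^t E and g(t) = dim̄_θ^t E are Lipschitz with constant 1; in particular, |dim_θ^t E − dim_θ^s E| ≤ |t − s| and |dim̄_θ^t E − dim̄_θ^s E| ≤ |t − s| for all s, t ∈ (0,d). -/
open MeasureTheory Metric Set Filter Topology
open scoped ENNReal BigOperators

noncomputable section

namespace PLip

variable {d : ℕ} {r θ s s' t t' M : ℝ} {E : Set (EuclideanSpace ℝ (Fin d))}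

lemma rpow_theta_le_one (hr0 : 0 < r) (hr1 : r < 1) (hθ0 : 0 < θ) : r ^ θ ≤ 1 :=
  Real.rpow_le_one hr0.le hr1.le hθ0.le

lemma div_le_div_of_nonneg_right' {a b c : ℝ} (h : a ≤ b) (hc : 0 < c) : a / c ≤ b / c := by
  gcongr

lemma kerPhi_pos (hr0 : 0 < r) (x : EuclideanSpace ℝ (Fin d)) :
    0 < kerPhi d r θ s t x := by
  unfold kerPhi
  split_ifs with h1 h2
  · exact one_pos
  · exact Real.rpow_pos_of_pos (div_pos hr0 (hr0.trans_le (not_lt.mp h1))) s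
  · exact div_pos (Real.rpow_pos_of_pos hr0 _)
      (Real.rpow_pos_of_pos (hr0.trans_le (not_lt.mp h1)) t)

lemma kerPhi_le_one (hr0 : 0 < r) (hr1 : r < 1) (hθ0 : 0 < θ) (hθ1 : θ ≤ 1)
    (hs : 0 ≤ s) (hst : s ≤ t) (x : EuclideanSpace ℝ (Fin d)) :
    kerPhi d r θ s t x ≤ 1 := by
  have ht : 0 ≤ t := hs.trans hst
  unfold kerPhi
  split_ifs with h1 h2
  · exact le_refl 1
  · have hn0 : 0 < ‖x‖ := hr0.trans_le (not_lt.mp h1)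
    exact Real.rpow_le_one (div_pos hr0 hn0).le ((div_le_one hn0).mpr (not_lt.mp h1)) hs
  · have hn0 : 0 < ‖x‖ := hr0.trans_le (not_lt.mp h1)
    rw [div_le_one (Real.rpow_pos_of_pos hn0 t)]
    calc r ^ (θ*(t-s)+s) ≤ r ^ (θ*t) :=
          Real.rpow_le_rpow_of_exponent_ge hr0 hr1.le (by nlinarith)
      _ = (r ^ θ) ^ t := Real.rpow_mul hr0.le θ t
      _ ≤ ‖x‖ ^ t := Real.rpow_le_rpow (Real.rpow_pos_of_pos hr0 θ).le (not_le.mp h2).le ht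

lemma kerPhi_ge (hr0 : 0 < r) (hr1 : r < 1) (hθ0 : 0 < θ) (hθ1 : θ ≤ 1)
    (hs : 0 ≤ s) (hst : s ≤ t) (hM : 1 ≤ M) {x : EuclideanSpace ℝ (Fin d)} (hx : ‖x‖ ≤ M) :
    r ^ (θ*(t-s)+s) / M ^ t ≤ kerPhi d r θ s t x := by
  have ht : 0 ≤ t := hs.trans hst
  have hM0 : (0:ℝ) < M := lt_of_lt_of_le one_pos hM
  have hMt : 1 ≤ M ^ t := Real.one_le_rpow hM ht
  have hMt0 : 0 < M ^ t := Real.rpow_pos_of_pos hM0 t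
  have he : s ≤ θ*(t-s)+s := by nlinarith
  have he0 : 0 ≤ θ*(t-s)+s := hs.trans he
  have hre1 : r ^ (θ*(t-s)+s) ≤ 1 := Real.rpow_le_one hr0.le hr1.le he0
  unfold kerPhi
  split_ifs with h1 h2
  · exact (div_le_one hMt0).mpr (hre1.trans hMt)
  · have hn0 : 0 < ‖x‖ := hr0.trans_le (not_lt.mp h1)
    have hrth : r ^ θ ≤ 1 := rpow_theta_le_one hr0 hr1 hθ0
    calc r ^ (θ*(t-s)+s) / M ^ t ≤ r ^ (θ*(t-s)+s) :=
          div_le_self (Real.rpow_pos_of_pos hr0 _).le hMt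
      _ ≤ r ^ s := Real.rpow_le_rpow_of_exponent_ge hr0 hr1.le he
      _ ≤ (r / ‖x‖) ^ s :=
          Real.rpow_le_rpow hr0.le ((le_div_iff₀ hn0).mpr (by nlinarith)) hs
  · have hn0 : 0 < ‖x‖ := hr0.trans_le (not_lt.mp h1)
    have h3 : (0:ℝ) < ‖x‖ ^ t := Real.rpow_pos_of_pos hn0 t
    rw [div_le_div_iff₀ hMt0 h3]
    have key : ‖x‖ ^ t ≤ M ^ t := Real.rpow_le_rpow hn0.le hx ht
    nlinarith [Real.rpow_nonneg hr0.le (θ*(t-s)+s)]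

lemma kerPhi_anti_s (hr0 : 0 < r) (hr1 : r < 1) (hθ1 : θ ≤ 1) (hss' : s ≤ s')
    (x : EuclideanSpace ℝ (Fin d)) : kerPhi d r θ s' t x ≤ kerPhi d r θ s t x := by
  unfold kerPhi
  split_ifs with h1 h2
  · exact le_refl 1
  · have hn0 : 0 < ‖x‖ := hr0.trans_le (not_lt.mp h1)
    exact Real.rpow_le_rpow_of_exponent_ge (div_pos hr0 hn0)
      ((div_le_one hn0).mpr (not_lt.mp h1)) hss'
  · have hn0 : 0 < ‖x‖ := hr0.trans_le (not_lt.mp h1)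
    have h3 : (0:ℝ) < ‖x‖ ^ t := Real.rpow_pos_of_pos hn0 t
    have key : r ^ (θ*(t-s')+s') ≤ r ^ (θ*(t-s)+s) :=
      Real.rpow_le_rpow_of_exponent_ge hr0 hr1.le (by nlinarith)
    exact div_le_div_of_nonneg_right' key h3

lemma kerPhi_s_lip (hr0 : 0 < r) (hr1 : r < 1) (hθ1 : θ ≤ 1) (hss' : s ≤ s')
    (x : EuclideanSpace ℝ (Fin d)) :
    kerPhi d r θ s t x ≤ r ^ ((θ-1)*(s'-s)) * kerPhi d r θ s' t x := by
  have hc : 1 ≤ r ^ ((θ-1)*(s'-s)) :=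
    Real.one_le_rpow_of_pos_of_le_one_of_nonpos hr0 hr1.le (by nlinarith)
  unfold kerPhi
  split_ifs with h1 h2
  · simpa using hc
  · have hn0 : 0 < ‖x‖ := hr0.trans_le (not_lt.mp h1)
    have hq0 : 0 < r / ‖x‖ := div_pos hr0 hn0
    have key : (r / ‖x‖) ^ (s - s') ≤ r ^ ((θ-1)*(s'-s)) := by
      rw [show s - s' = -(s'-s) by ring, show (θ-1)*(s'-s) = -((1-θ)*(s'-s)) by ring,
        Real.rpow_neg hq0.le, Real.rpow_neg hr0.le]
      apply inv_anti₀ (Real.rpow_pos_of_pos hr0 _)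
      have hb : r ^ (1-θ) ≤ r / ‖x‖ := by
        rw [Real.rpow_sub hr0, Real.rpow_one]
        gcongr
      calc r ^ ((1-θ)*(s'-s)) = (r ^ (1-θ)) ^ (s'-s) := Real.rpow_mul hr0.le _ _
        _ ≤ (r / ‖x‖) ^ (s'-s) :=
            Real.rpow_le_rpow (Real.rpow_nonneg hr0.le _) hb (by linarith)
    calc (r / ‖x‖) ^ s = (r / ‖x‖) ^ (s - s') * (r / ‖x‖) ^ s' := by
          rw [← Real.rpow_add hq0]; ring_nf
      _ ≤ r ^ ((θ-1)*(s'-s)) * (r / ‖x‖) ^ s' :=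
          mul_le_mul_of_nonneg_right key (Real.rpow_nonneg hq0.le _)
  · refine le_of_eq ?_
    rw [show θ*(t-s)+s = (θ-1)*(s'-s) + (θ*(t-s')+s') by ring, Real.rpow_add hr0,
      mul_div_assoc]

lemma kerPhi_anti_t (hr0 : 0 < r) (htt' : t ≤ t')
    (x : EuclideanSpace ℝ (Fin d)) : kerPhi d r θ s t' x ≤ kerPhi d r θ s t x := by
  obtain ⟨τ, hτ0, rfl⟩ : ∃ τ, 0 ≤ τ ∧ t' = t + τ := ⟨t'-t, by linarith, by ring⟩
  unfold kerPhi
  split_ifs with h1 h2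
  · exact le_refl 1
  · exact le_refl _
  · have hn0 : 0 < ‖x‖ := hr0.trans_le (not_lt.mp h1)
    have hrθ : (0:ℝ) < r ^ θ := Real.rpow_pos_of_pos hr0 θ
    have key : r ^ (θ*τ) ≤ ‖x‖ ^ τ := by
      rw [Real.rpow_mul hr0.le]
      exact Real.rpow_le_rpow hrθ.le (not_le.mp h2).le hτ0
    have e1 : r ^ (θ*(t+τ-s)+s) = r ^ (θ*(t-s)+s) * r ^ (θ*τ) := by
      rw [← Real.rpow_add hr0]; ring_nf
    have e2 : ‖x‖ ^ (t+τ) = ‖x‖ ^ t * ‖x‖ ^ τ := by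
      rw [← Real.rpow_add hn0]
    rw [e1, e2, div_le_div_iff₀ (by positivity) (by positivity)]
    have h3 : (0:ℝ) < ‖x‖ ^ t := Real.rpow_pos_of_pos hn0 t
    have h4 : (0:ℝ) ≤ r ^ (θ*(t-s)+s) := Real.rpow_nonneg hr0.le _
    nlinarith [mul_le_mul_of_nonneg_left key h4]

lemma kerPhi_t_lip (hr0 : 0 < r) (hr1 : r < 1) (hθ0 : 0 < θ) (hM : 1 ≤ M)
    (htt' : t ≤ t') {x : EuclideanSpace ℝ (Fin d)} (hx : ‖x‖ ≤ M) :
    kerPhi d r θ s t x ≤ r ^ (-(θ*(t'-t))) * M ^ (t'-t) * kerPhi d r θ s t' x := by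
  obtain ⟨τ, hτ0, rfl⟩ : ∃ τ, 0 ≤ τ ∧ t' = t + τ := ⟨t'-t, by linarith, by ring⟩
  have hτeq : t + τ - t = τ := by ring
  rw [hτeq]
  have hM0 : (0:ℝ) < M := lt_of_lt_of_le one_pos hM
  have hc : 1 ≤ r ^ (-(θ*τ)) * M ^ τ := by
    have h1 : 1 ≤ r ^ (-(θ*τ)) :=
      Real.one_le_rpow_of_pos_of_le_one_of_nonpos hr0 hr1.le (by nlinarith)
    have h2 : 1 ≤ M ^ τ := Real.one_le_rpow hM hτ0
    nlinarith
  unfold kerPhi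
  split_ifs with h1 h2
  · simpa using hc
  · have hn0 : 0 < ‖x‖ := hr0.trans_le (not_lt.mp h1)
    exact le_mul_of_one_le_left (Real.rpow_pos_of_pos (div_pos hr0 hn0) s).le hc
  · have hn0 : 0 < ‖x‖ := hr0.trans_le (not_lt.mp h1)
    have key : ‖x‖ ^ τ ≤ M ^ τ := Real.rpow_le_rpow hn0.le hx hτ0
    have e1 : r ^ (θ*(t+τ-s)+s) = r ^ (θ*(t-s)+s) * r ^ (θ*τ) := by
      rw [← Real.rpow_add hr0]; ring_nf
    have e2 : ‖x‖ ^ (t+τ) = ‖x‖ ^ t * ‖x‖ ^ τ := by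
      rw [← Real.rpow_add hn0]
    have e3 : r ^ (-(θ*τ)) * r ^ (θ*τ) = 1 := by
      rw [← Real.rpow_add hr0, neg_add_cancel, Real.rpow_zero]
    rw [e1, e2]
    have h3 : (0:ℝ) < ‖x‖ ^ t := Real.rpow_pos_of_pos hn0 t
    have h4 : (0:ℝ) < ‖x‖ ^ τ := Real.rpow_pos_of_pos hn0 τ
    have h5 : (0:ℝ) < r ^ (θ*(t-s)+s) := Real.rpow_pos_of_pos hr0 _
    have h6 : (0:ℝ) < r ^ (θ*τ) := Real.rpow_pos_of_pos hr0 _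
    have h7 : (0:ℝ) < r ^ (-(θ*τ)) := Real.rpow_pos_of_pos hr0 _
    rw [div_le_iff₀ h3]
    have expand : r ^ (-(θ*τ)) * M ^ τ * (r ^ (θ*(t-s)+s) * r ^ (θ*τ) / (‖x‖^t * ‖x‖^τ)) * ‖x‖^t
        = (r ^ (-(θ*τ)) * r ^ (θ*τ)) * (M ^ τ / ‖x‖ ^ τ) * r ^ (θ*(t-s)+s) := by
      field_simp
    rw [expand, e3, one_mul]
    exact le_mul_of_one_le_left h5.le ((one_le_div h4).mpr key)






def Mdiam (E : Set (EuclideanSpace ℝ (Fin d))) : ℝ := max (diam E) 1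

lemma one_le_Mdiam : 1 ≤ Mdiam E := le_max_right _ _

lemma Mdiam_pos : (0:ℝ) < Mdiam E := lt_of_lt_of_le one_pos one_le_Mdiam

lemma norm_sub_le_Mdiam (hEc : IsCompact E) {x y : EuclideanSpace ℝ (Fin d)}
    (hx : x ∈ E) (hy : y ∈ E) : ‖x - y‖ ≤ Mdiam E := by
  rw [← dist_eq_norm]
  exact (dist_le_diam_of_mem hEc.isBounded hx hy).trans (le_max_left _ _)

lemma kerPhi_measurable : Measurable (kerPhi d r θ s t) := by
  unfold kerPhi
  refine Measurable.ite (measurableSet_lt measurable_norm measurable_const) measurable_const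
    (Measurable.ite (measurableSet_le measurable_norm measurable_const) ?_ ?_)
  · fun_prop
  · fun_prop

lemma inner_integrable (hr0 : 0 < r) (hr1 : r < 1) (hθ0 : 0 < θ) (hθ1 : θ ≤ 1)
    (hs : 0 ≤ s) (hst : s ≤ t) (μ : Measure (EuclideanSpace ℝ (Fin d)))
    [IsProbabilityMeasure μ] (x : EuclideanSpace ℝ (Fin d)) :
    Integrable (fun y => kerPhi d r θ s t (x - y)) μ := by
  refine Integrable.mono' (integrable_const 1)
    ((kerPhi_measurable.comp (measurable_const.sub measurable_id)).aestronglyMeasurable)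
    (ae_of_all _ fun y => ?_)
  rw [Real.norm_eq_abs, abs_of_pos (kerPhi_pos hr0 _)]
  exact kerPhi_le_one hr0 hr1 hθ0 hθ1 hs hst _

lemma innerFn_sm (μ : Measure (EuclideanSpace ℝ (Fin d))) [SFinite μ] :
    StronglyMeasurable (fun x => ∫ y, kerPhi d r θ s t (x - y) ∂μ) := by
  apply StronglyMeasurable.integral_prod_right
  exact ((kerPhi_measurable.comp (measurable_fst.sub measurable_snd))).stronglyMeasurable

lemma innerFn_nonneg (hr0 : 0 < r) (μ : Measure (EuclideanSpace ℝ (Fin d)))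
    (x : EuclideanSpace ℝ (Fin d)) : 0 ≤ ∫ y, kerPhi d r θ s t (x - y) ∂μ :=
  integral_nonneg fun y => (kerPhi_pos hr0 _).le

lemma innerFn_le_one (hr0 : 0 < r) (hr1 : r < 1) (hθ0 : 0 < θ) (hθ1 : θ ≤ 1)
    (hs : 0 ≤ s) (hst : s ≤ t) (μ : Measure (EuclideanSpace ℝ (Fin d)))
    [IsProbabilityMeasure μ] (x : EuclideanSpace ℝ (Fin d)) :
    ∫ y, kerPhi d r θ s t (x - y) ∂μ ≤ 1 := by
  calc ∫ y, kerPhi d r θ s t (x - y) ∂μ ≤ ∫ _, (1:ℝ) ∂μ :=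
        integral_mono (inner_integrable hr0 hr1 hθ0 hθ1 hs hst μ x) (integrable_const 1)
          fun y => kerPhi_le_one hr0 hr1 hθ0 hθ1 hs hst _
    _ = 1 := by simp

lemma innerFn_integrable (hr0 : 0 < r) (hr1 : r < 1) (hθ0 : 0 < θ) (hθ1 : θ ≤ 1)
    (hs : 0 ≤ s) (hst : s ≤ t) (μ : Measure (EuclideanSpace ℝ (Fin d)))
    [IsProbabilityMeasure μ] :
    Integrable (fun x => ∫ y, kerPhi d r θ s t (x - y) ∂μ) μ := by
  refine Integrable.mono' (integrable_const 1) (innerFn_sm μ).aestronglyMeasurable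
    (ae_of_all _ fun x => ?_)
  rw [Real.norm_eq_abs, abs_of_nonneg (innerFn_nonneg hr0 μ x)]
  exact innerFn_le_one hr0 hr1 hθ0 hθ1 hs hst μ x

lemma ae_mem_E {μ : Measure (EuclideanSpace ℝ (Fin d))} (hsupp : μ Eᶜ = 0) :
    ∀ᵐ z ∂μ, z ∈ E := ae_iff.mpr hsupp

lemma double_integral_le_one (hr0 : 0 < r) (hr1 : r < 1) (hθ0 : 0 < θ) (hθ1 : θ ≤ 1)
    (hs : 0 ≤ s) (hst : s ≤ t) (μ : Measure (EuclideanSpace ℝ (Fin d)))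
    [IsProbabilityMeasure μ] :
    ∫ x, ∫ y, kerPhi d r θ s t (x - y) ∂μ ∂μ ≤ 1 := by
  calc ∫ x, ∫ y, kerPhi d r θ s t (x - y) ∂μ ∂μ ≤ ∫ _, (1:ℝ) ∂μ :=
        integral_mono (innerFn_integrable hr0 hr1 hθ0 hθ1 hs hst μ) (integrable_const 1)
          fun x => innerFn_le_one hr0 hr1 hθ0 hθ1 hs hst μ x
    _ = 1 := by simp

lemma double_integral_ge (hEc : IsCompact E) (hr0 : 0 < r) (hr1 : r < 1) (hθ0 : 0 < θ)
    (hθ1 : θ ≤ 1) (hs : 0 ≤ s) (hst : s ≤ t) (μ : Measure (EuclideanSpace ℝ (Fin d)))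
    [IsProbabilityMeasure μ] (hsupp : μ Eᶜ = 0) :
    r ^ (θ*(t-s)+s) / Mdiam E ^ t ≤ ∫ x, ∫ y, kerPhi d r θ s t (x - y) ∂μ ∂μ := by
  have hlo : ∀ x ∈ E, r ^ (θ*(t-s)+s) / Mdiam E ^ t ≤ ∫ y, kerPhi d r θ s t (x - y) ∂μ := by
    intro x hx
    calc r ^ (θ*(t-s)+s) / Mdiam E ^ t = ∫ _, r ^ (θ*(t-s)+s) / Mdiam E ^ t ∂μ := by simp
      _ ≤ ∫ y, kerPhi d r θ s t (x - y) ∂μ :=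
        integral_mono_ae (integrable_const _) (inner_integrable hr0 hr1 hθ0 hθ1 hs hst μ x)
          ((ae_mem_E hsupp).mono fun y hy =>
            kerPhi_ge hr0 hr1 hθ0 hθ1 hs hst one_le_Mdiam (norm_sub_le_Mdiam hEc hx hy))
  calc r ^ (θ*(t-s)+s) / Mdiam E ^ t = ∫ _, r ^ (θ*(t-s)+s) / Mdiam E ^ t ∂μ := by simp
    _ ≤ ∫ x, ∫ y, kerPhi d r θ s t (x - y) ∂μ ∂μ :=
      integral_mono_ae (integrable_const _) (innerFn_integrable hr0 hr1 hθ0 hθ1 hs hst μ)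
        ((ae_mem_E hsupp).mono hlo)

lemma double_integral_comp (hEc : IsCompact E) {c : ℝ}
    (hr0 : 0 < r) (hr1 : r < 1) (hθ0 : 0 < θ) (hθ1 : θ ≤ 1)
    (hs : 0 ≤ s) (hst : s ≤ t) (hs' : 0 ≤ s') (hst' : s' ≤ t')
    (h12 : ∀ z : EuclideanSpace ℝ (Fin d), ‖z‖ ≤ Mdiam E → kerPhi d r θ s t z ≤ c * kerPhi d r θ s' t' z)
    (μ : Measure (EuclideanSpace ℝ (Fin d))) [IsProbabilityMeasure μ] (hsupp : μ Eᶜ = 0) :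
    ∫ x, ∫ y, kerPhi d r θ s t (x - y) ∂μ ∂μ ≤ c * ∫ x, ∫ y, kerPhi d r θ s' t' (x - y) ∂μ ∂μ := by
  have hc : 0 ≤ c := by
    have h0 := h12 0 (by simpa using Mdiam_pos.le)
    have h1 := kerPhi_pos (d := d) (θ := θ) (s := s) (t := t) hr0 0
    have h2 := kerPhi_pos (d := d) (θ := θ) (s := s') (t := t') hr0 0
    nlinarith
  have hinner : ∀ x ∈ E, ∫ y, kerPhi d r θ s t (x - y) ∂μ
      ≤ c * ∫ y, kerPhi d r θ s' t' (x - y) ∂μ := by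
    intro x hx
    rw [← integral_const_mul]
    refine integral_mono_ae (inner_integrable hr0 hr1 hθ0 hθ1 hs hst μ x)
      ((inner_integrable hr0 hr1 hθ0 hθ1 hs' hst' μ x).const_mul c)
      ((ae_mem_E hsupp).mono fun y hy => h12 _ (norm_sub_le_Mdiam hEc hx hy))
  calc ∫ x, ∫ y, kerPhi d r θ s t (x - y) ∂μ ∂μ
      ≤ ∫ x, c * ∫ y, kerPhi d r θ s' t' (x - y) ∂μ ∂μ :=
        integral_mono_ae (innerFn_integrable hr0 hr1 hθ0 hθ1 hs hst μ)
          ((innerFn_integrable hr0 hr1 hθ0 hθ1 hs' hst' μ).const_mul c)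
          ((ae_mem_E hsupp).mono hinner)
    _ = c * ∫ x, ∫ y, kerPhi d r θ s' t' (x - y) ∂μ ∂μ := integral_const_mul _ _


def capSet (d : ℕ) (E : Set (EuclideanSpace ℝ (Fin d))) (θ r s t : ℝ) : Set ℝ :=
  { I : ℝ | ∃ μ : Measure (EuclideanSpace ℝ (Fin d)),
      IsProbabilityMeasure μ ∧ μ Eᶜ = 0 ∧
      I = ∫ x, ∫ y, kerPhi d r θ s t (x - y) ∂μ ∂μ }

lemma capacity_eq : capacity d E θ r s t = (sInf (capSet d E θ r s t))⁻¹ := rfl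

lemma capSet_nonempty (hE : E.Nonempty) (hEc : IsCompact E) :
    (capSet d E θ r s t).Nonempty := by
  obtain ⟨a, ha⟩ := hE
  exact ⟨_, Measure.dirac a, inferInstance, by
    rw [Measure.dirac_apply' a hEc.isClosed.measurableSet.compl]
    simp [ha], rfl⟩

lemma capSet_mem_bounds (hEc : IsCompact E) (hr0 : 0 < r) (hr1 : r < 1) (hθ0 : 0 < θ)
    (hθ1 : θ ≤ 1) (hs : 0 ≤ s) (hst : s ≤ t) {I : ℝ} (hI : I ∈ capSet d E θ r s t) :
    r ^ (θ*(t-s)+s) / Mdiam E ^ t ≤ I ∧ I ≤ 1 := by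
  obtain ⟨μ, hμ, hsupp, rfl⟩ := hI
  haveI := hμ
  exact ⟨double_integral_ge hEc hr0 hr1 hθ0 hθ1 hs hst μ hsupp,
    double_integral_le_one hr0 hr1 hθ0 hθ1 hs hst μ⟩

lemma capSet_bddBelow (hEc : IsCompact E) (hr0 : 0 < r) (hr1 : r < 1) (hθ0 : 0 < θ)
    (hθ1 : θ ≤ 1) (hs : 0 ≤ s) (hst : s ≤ t) : BddBelow (capSet d E θ r s t) :=
  ⟨0, fun I hI => le_trans
    (div_nonneg (Real.rpow_nonneg hr0.le _) (Real.rpow_pos_of_pos Mdiam_pos _).le)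
    (capSet_mem_bounds hEc hr0 hr1 hθ0 hθ1 hs hst hI).1⟩

lemma sInf_capSet_ge (hE : E.Nonempty) (hEc : IsCompact E) (hr0 : 0 < r) (hr1 : r < 1)
    (hθ0 : 0 < θ) (hθ1 : θ ≤ 1) (hs : 0 ≤ s) (hst : s ≤ t) :
    r ^ (θ*(t-s)+s) / Mdiam E ^ t ≤ sInf (capSet d E θ r s t) :=
  le_csInf (capSet_nonempty hE hEc)
    fun _ hI => (capSet_mem_bounds hEc hr0 hr1 hθ0 hθ1 hs hst hI).1

lemma sInf_capSet_pos (hE : E.Nonempty) (hEc : IsCompact E) (hr0 : 0 < r) (hr1 : r < 1)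
    (hθ0 : 0 < θ) (hθ1 : θ ≤ 1) (hs : 0 ≤ s) (hst : s ≤ t) :
    0 < sInf (capSet d E θ r s t) :=
  lt_of_lt_of_le (div_pos (Real.rpow_pos_of_pos hr0 _) (Real.rpow_pos_of_pos Mdiam_pos _))
    (sInf_capSet_ge hE hEc hr0 hr1 hθ0 hθ1 hs hst)

lemma sInf_capSet_le_one (hE : E.Nonempty) (hEc : IsCompact E) (hr0 : 0 < r) (hr1 : r < 1)
    (hθ0 : 0 < θ) (hθ1 : θ ≤ 1) (hs : 0 ≤ s) (hst : s ≤ t) :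
    sInf (capSet d E θ r s t) ≤ 1 := by
  obtain ⟨I₀, hI₀⟩ := capSet_nonempty (d := d) (θ := θ) (r := r) (s := s) (t := t) hE hEc
  exact le_trans (csInf_le (capSet_bddBelow hEc hr0 hr1 hθ0 hθ1 hs hst) hI₀)
    (capSet_mem_bounds hEc hr0 hr1 hθ0 hθ1 hs hst hI₀).2

lemma one_le_capacity (hE : E.Nonempty) (hEc : IsCompact E) (hr0 : 0 < r) (hr1 : r < 1)
    (hθ0 : 0 < θ) (hθ1 : θ ≤ 1) (hs : 0 ≤ s) (hst : s ≤ t) :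
    1 ≤ capacity d E θ r s t := by
  rw [capacity_eq]
  simpa using inv_anti₀ (sInf_capSet_pos hE hEc hr0 hr1 hθ0 hθ1 hs hst)
    (sInf_capSet_le_one hE hEc hr0 hr1 hθ0 hθ1 hs hst)

lemma capacity_le (hE : E.Nonempty) (hEc : IsCompact E) (hr0 : 0 < r) (hr1 : r < 1)
    (hθ0 : 0 < θ) (hθ1 : θ ≤ 1) (hs : 0 ≤ s) (hst : s ≤ t) :
    capacity d E θ r s t ≤ Mdiam E ^ t * r ^ (-(θ*(t-s)+s)) := by
  rw [capacity_eq]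
  have h1 := sInf_capSet_ge hE hEc hr0 hr1 hθ0 hθ1 hs hst
  have h2 : (0:ℝ) < r ^ (θ*(t-s)+s) / Mdiam E ^ t :=
    div_pos (Real.rpow_pos_of_pos hr0 _) (Real.rpow_pos_of_pos Mdiam_pos _)
  calc (sInf (capSet d E θ r s t))⁻¹ ≤ (r ^ (θ*(t-s)+s) / Mdiam E ^ t)⁻¹ :=
        inv_anti₀ h2 h1
    _ = Mdiam E ^ t * r ^ (-(θ*(t-s)+s)) := by
        rw [inv_div, Real.rpow_neg hr0.le, div_eq_mul_inv]

lemma capacity_comp (hE : E.Nonempty) (hEc : IsCompact E) {c : ℝ} (hc : 0 < c)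
    (hr0 : 0 < r) (hr1 : r < 1) (hθ0 : 0 < θ) (hθ1 : θ ≤ 1)
    (hs : 0 ≤ s) (hst : s ≤ t) (hs' : 0 ≤ s') (hst' : s' ≤ t')
    (h12 : ∀ z : EuclideanSpace ℝ (Fin d), ‖z‖ ≤ Mdiam E →
      kerPhi d r θ s t z ≤ c * kerPhi d r θ s' t' z) :
    capacity d E θ r s' t' ≤ c * capacity d E θ r s t := by
  set A1 := sInf (capSet d E θ r s t) with hA1
  set A2 := sInf (capSet d E θ r s' t') with hA2
  have hA1pos : 0 < A1 := sInf_capSet_pos hE hEc hr0 hr1 hθ0 hθ1 hs hst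
  have key : A1 / c ≤ A2 := by
    refine le_csInf (capSet_nonempty hE hEc) ?_
    rintro I2 ⟨μ, hμ, hsupp, rfl⟩
    haveI := hμ
    have h1 : (∫ x, ∫ y, kerPhi d r θ s t (x - y) ∂μ ∂μ) ∈ capSet d E θ r s t :=
      ⟨μ, hμ, hsupp, rfl⟩
    have h3 : A1 ≤ ∫ x, ∫ y, kerPhi d r θ s t (x - y) ∂μ ∂μ :=
      csInf_le (capSet_bddBelow hEc hr0 hr1 hθ0 hθ1 hs hst) h1
    have h2 := double_integral_comp hEc hr0 hr1 hθ0 hθ1 hs hst hs' hst' h12 μ hsupp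
    rw [div_le_iff₀ hc]
    nlinarith
  rw [capacity_eq, capacity_eq]
  calc A2⁻¹ ≤ (A1 / c)⁻¹ := inv_anti₀ (div_pos hA1pos hc) key
    _ = c * A1⁻¹ := by rw [inv_div, div_eq_mul_inv]

lemma negLog_pos (hr0 : 0 < r) (hr1 : r < 1) : 0 < -Real.log r := by
  have := Real.log_neg hr0 hr1; linarith

lemma capRatio_nonneg (hE : E.Nonempty) (hEc : IsCompact E) (hr0 : 0 < r) (hr1 : r < 1)
    (hθ0 : 0 < θ) (hθ1 : θ ≤ 1) (hs : 0 ≤ s) (hst : s ≤ t) :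
    0 ≤ capRatio d E θ s t r :=
  div_nonneg (Real.log_nonneg (one_le_capacity hE hEc hr0 hr1 hθ0 hθ1 hs hst))
    (negLog_pos hr0 hr1).le

lemma capRatio_le (hE : E.Nonempty) (hEc : IsCompact E) (hr0 : 0 < r) (hr1 : r < 1)
    (hθ0 : 0 < θ) (hθ1 : θ ≤ 1) (hs : 0 ≤ s) (hst : s ≤ t) :
    capRatio d E θ s t r ≤ (θ*(t-s)+s) + t * Real.log (Mdiam E) / (-Real.log r) := by
  have hL := negLog_pos hr0 hr1
  have hMt : (0:ℝ) < Mdiam E ^ t := Real.rpow_pos_of_pos Mdiam_pos t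
  have hre : (0:ℝ) < r ^ (-(θ*(t-s)+s)) := Real.rpow_pos_of_pos hr0 _
  have hcap1 := one_le_capacity hE hEc hr0 hr1 hθ0 hθ1 hs hst
  have hcap2 := capacity_le hE hEc hr0 hr1 hθ0 hθ1 hs hst
  have hlog : Real.log (capacity d E θ r s t)
      ≤ Real.log (Mdiam E ^ t * r ^ (-(θ*(t-s)+s))) :=
    Real.log_le_log (by linarith) hcap2
  have heq : Real.log (Mdiam E ^ t * r ^ (-(θ*(t-s)+s)))
      = t * Real.log (Mdiam E) + (θ*(t-s)+s) * (-Real.log r) := by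
    rw [Real.log_mul hMt.ne' hre.ne', Real.log_rpow Mdiam_pos, Real.log_rpow hr0]
    ring
  have hTL : ((θ*(t-s)+s) + t * Real.log (Mdiam E) / (-Real.log r)) * (-Real.log r)
      = (θ*(t-s)+s) * (-Real.log r) + t * Real.log (Mdiam E) := by
    have hlr : Real.log r ≠ 0 := (Real.log_neg hr0 hr1).ne
    field_simp
    ring
  unfold capRatio
  rw [div_le_iff₀ hL, hTL]
  linarith [heq ▸ hlog]

lemma capRatio_mono_of_capacity_le (hE : E.Nonempty) (hEc : IsCompact E)
    (hr0 : 0 < r) (hr1 : r < 1) (hθ0 : 0 < θ) (hθ1 : θ ≤ 1)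
    (hs : 0 ≤ s) (hst : s ≤ t) (hs' : 0 ≤ s') (hst' : s' ≤ t')
    (h : capacity d E θ r s t ≤ capacity d E θ r s' t') :
    capRatio d E θ s t r ≤ capRatio d E θ s' t' r := by
  have hL := negLog_pos hr0 hr1
  have h1 := one_le_capacity hE hEc hr0 hr1 hθ0 hθ1 hs hst
  exact div_le_div_of_nonneg_right' (Real.log_le_log (by linarith) h) hL

lemma capRatio_comp {e K : ℝ} (hE : E.Nonempty) (hEc : IsCompact E)
    (hr0 : 0 < r) (hr1 : r < 1) (hθ0 : 0 < θ) (hθ1 : θ ≤ 1)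
    (hs : 0 ≤ s) (hst : s ≤ t) (hs' : 0 ≤ s') (hst' : s' ≤ t') (hK : 0 < K)
    (hcap : capacity d E θ r s' t' ≤ r ^ (-e) * K * capacity d E θ r s t) :
    capRatio d E θ s' t' r ≤ capRatio d E θ s t r + e + Real.log K / (-Real.log r) := by
  have hL := negLog_pos hr0 hr1
  have hre : (0:ℝ) < r ^ (-e) := Real.rpow_pos_of_pos hr0 _
  have h1 := one_le_capacity hE hEc hr0 hr1 hθ0 hθ1 hs hst
  have h1' := one_le_capacity hE hEc hr0 hr1 hθ0 hθ1 hs' hst'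
  have hlog : Real.log (capacity d E θ r s' t')
      ≤ Real.log (r ^ (-e) * K * capacity d E θ r s t) :=
    Real.log_le_log (by linarith) hcap
  have heq : Real.log (r ^ (-e) * K * capacity d E θ r s t)
      = e * (-Real.log r) + Real.log K + Real.log (capacity d E θ r s t) := by
    rw [Real.log_mul (by positivity) (by linarith), Real.log_mul hre.ne' hK.ne',
      Real.log_rpow hr0]
    ring
  unfold capRatio
  rw [div_le_iff₀ hL]
  have expand : (Real.log (capacity d E θ r s t) / (-Real.log r) + e
        + Real.log K / (-Real.log r)) * (-Real.log r)
      = Real.log (capacity d E θ r s t) + e * (-Real.log r) + Real.log K := by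
    have hlr : Real.log r ≠ 0 := (Real.log_neg hr0 hr1).ne
    field_simp
    ring
  rw [expand]
  linarith [heq ▸ hlog]

lemma ratio_mono_s (hE : E.Nonempty) (hEc : IsCompact E) (hr0 : 0 < r) (hr1 : r < 1)
    (hθ0 : 0 < θ) (hθ1 : θ ≤ 1) (hs : 0 ≤ s) (hss' : s ≤ s') (hs't : s' ≤ t) :
    capRatio d E θ s t r ≤ capRatio d E θ s' t r := by
  refine capRatio_mono_of_capacity_le hE hEc hr0 hr1 hθ0 hθ1 hs (hss'.trans hs't)
    (hs.trans hss') hs't ?_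
  have := capacity_comp hE hEc (c := 1) one_pos hr0 hr1 hθ0 hθ1
    (hs.trans hss') hs't hs (hss'.trans hs't)
    (fun z _ => by simpa using kerPhi_anti_s (t := t) hr0 hr1 hθ1 hss' z)
  simpa using this

lemma ratio_lip_s (hE : E.Nonempty) (hEc : IsCompact E) (hr0 : 0 < r) (hr1 : r < 1)
    (hθ0 : 0 < θ) (hθ1 : θ ≤ 1) (hs : 0 ≤ s) (hss' : s ≤ s') (hs't : s' ≤ t) :
    capRatio d E θ s' t r ≤ capRatio d E θ s t r + (1-θ)*(s'-s) := by
  have hcap := capacity_comp hE hEc (c := r ^ ((θ-1)*(s'-s)))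
    (Real.rpow_pos_of_pos hr0 _) hr0 hr1 hθ0 hθ1 hs (hss'.trans hs't)
    (hs.trans hss') hs't (fun z _ => kerPhi_s_lip (t := t) hr0 hr1 hθ1 hss' z)
  rw [show (θ-1)*(s'-s) = -((1-θ)*(s'-s)) by ring, ← mul_one (r ^ (-((1-θ)*(s'-s))))] at hcap
  have := capRatio_comp hE hEc hr0 hr1 hθ0 hθ1 hs (hss'.trans hs't)
    (hs.trans hss') hs't one_pos (by rw [mul_one] at hcap ⊢; exact hcap)
  simpa using this

lemma ratio_mono_t (hE : E.Nonempty) (hEc : IsCompact E) (hr0 : 0 < r) (hr1 : r < 1)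
    (hθ0 : 0 < θ) (hθ1 : θ ≤ 1) (hs : 0 ≤ s) (hst : s ≤ t) (htt' : t ≤ t') :
    capRatio d E θ s t r ≤ capRatio d E θ s t' r := by
  refine capRatio_mono_of_capacity_le hE hEc hr0 hr1 hθ0 hθ1 hs hst hs (hst.trans htt') ?_
  have := capacity_comp hE hEc (c := 1) one_pos hr0 hr1 hθ0 hθ1
    hs (hst.trans htt') hs hst
    (fun z _ => by simpa using kerPhi_anti_t (s := s) (θ := θ) hr0 htt' z)
  simpa using this

lemma ratio_lip_t (hE : E.Nonempty) (hEc : IsCompact E) (hr0 : 0 < r) (hr1 : r < 1)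
    (hθ0 : 0 < θ) (hθ1 : θ ≤ 1) (hs : 0 ≤ s) (hst : s ≤ t) (htt' : t ≤ t') :
    capRatio d E θ s t' r ≤ capRatio d E θ s t r + θ*(t'-t)
      + (t'-t) * Real.log (Mdiam E) / (-Real.log r) := by
  have hτ : 0 ≤ t' - t := by linarith
  have hcap := capacity_comp hE hEc
    (c := r ^ (-(θ*(t'-t))) * Mdiam E ^ (t'-t))
    (mul_pos (Real.rpow_pos_of_pos hr0 _) (Real.rpow_pos_of_pos Mdiam_pos _))
    hr0 hr1 hθ0 hθ1 hs hst hs (hst.trans htt')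
    (fun z hz => kerPhi_t_lip (s := s) hr0 hr1 hθ0 one_le_Mdiam htt' hz)
  have := capRatio_comp (e := θ*(t'-t)) (K := Mdiam E ^ (t'-t)) hE hEc hr0 hr1 hθ0 hθ1
    hs hst hs (hst.trans htt') (Real.rpow_pos_of_pos Mdiam_pos _) hcap
  rwa [Real.log_rpow Mdiam_pos] at this

lemma tendsto_aux (a : ℝ) :
    Tendsto (fun r : ℝ => a / (-Real.log r)) (𝓝[>] (0:ℝ)) (𝓝 0) := by
  have h1 : Tendsto (fun r : ℝ => -Real.log r) (𝓝[>] (0:ℝ)) atTop :=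
    tendsto_neg_atBot_atTop.comp Real.tendsto_log_nhdsGT_zero
  have h2 := h1.inv_tendsto_atTop
  have h3 := h2.const_mul a
  simpa [div_eq_mul_inv] using h3

lemma ratio_ev_mem (hE : E.Nonempty) (hEc : IsCompact E) (hθ0 : 0 < θ) (hθ1 : θ ≤ 1)
    (hs : 0 ≤ s) (hst : s ≤ t) :
    ∀ᶠ r in 𝓝[>] (0:ℝ), capRatio d E θ s t r ∈ Icc 0 (t+1) := by
  have hIoo : Ioo (0:ℝ) 1 ∈ 𝓝[>] (0:ℝ) := Ioo_mem_nhdsGT_of_mem ⟨le_refl 0, one_pos⟩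
  have hsm : ∀ᶠ r in 𝓝[>] (0:ℝ), t * Real.log (Mdiam E) / (-Real.log r) ≤ 1 :=
    (tendsto_aux (t * Real.log (Mdiam E))).eventually (eventually_le_nhds one_pos)
  filter_upwards [hIoo, hsm] with r hr h1
  refine ⟨capRatio_nonneg hE hEc hr.1 hr.2 hθ0 hθ1 hs hst, ?_⟩
  have h2 := capRatio_le hE hEc hr.1 hr.2 hθ0 hθ1 hs hst
  have h3 : θ*(t-s)+s ≤ t := by nlinarith
  linarith

section LiminfHelpers

variable {u v w : ℝ → ℝ} {K1 K2 c L : ℝ}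

lemma ev_bddAbove (h : ∀ᶠ r in 𝓝[>] (0:ℝ), u r ∈ Icc 0 K1) :
    IsBoundedUnder (· ≤ ·) (𝓝[>] (0:ℝ)) u :=
  ⟨K1, eventually_map.mpr (h.mono fun _ hr => hr.2)⟩

lemma ev_bddBelow (h : ∀ᶠ r in 𝓝[>] (0:ℝ), u r ∈ Icc 0 K1) :
    IsBoundedUnder (· ≥ ·) (𝓝[>] (0:ℝ)) u :=
  ⟨0, eventually_map.mpr (h.mono fun _ hr => hr.1)⟩

lemma my_liminf_add_const (u : ℝ → ℝ) (c : ℝ) (h : ∀ᶠ r in 𝓝[>] (0:ℝ), u r ∈ Icc 0 K1) :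
    liminf (fun r => u r + c) (𝓝[>] (0:ℝ)) = liminf u (𝓝[>] (0:ℝ)) + c := by
  have hb := ev_bddBelow h
  have hcb := (ev_bddAbove h).isCoboundedUnder_flip
  have hb2 : IsBoundedUnder (· ≥ ·) (𝓝[>] (0:ℝ)) fun r => u r + c :=
    ⟨0 + c, eventually_map.mpr (h.mono fun _ hr => by simpa using add_le_add_right hr.1 c)⟩
  have hcb2 : IsCoboundedUnder (· ≥ ·) (𝓝[>] (0:ℝ)) fun r => u r + c :=
    IsBoundedUnder.isCoboundedUnder_flip
      ⟨K1 + c, eventually_map.mpr (h.mono fun _ hr => add_le_add_left hr.2 c)⟩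
  have := (OrderIso.addRight c).liminf_apply (f := 𝓝[>] (0:ℝ)) (u := u) hb hcb
    (by simpa using hb2) (by simpa using hcb2)
  simpa using this.symm

lemma my_limsup_add_const (u : ℝ → ℝ) (c : ℝ) (h : ∀ᶠ r in 𝓝[>] (0:ℝ), u r ∈ Icc 0 K1) :
    limsup (fun r => u r + c) (𝓝[>] (0:ℝ)) = limsup u (𝓝[>] (0:ℝ)) + c := by
  have hb := ev_bddAbove h
  have hcb := (ev_bddBelow h).isCoboundedUnder_flip
  have hb2 : IsBoundedUnder (· ≤ ·) (𝓝[>] (0:ℝ)) fun r => u r + c :=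
    ⟨K1 + c, eventually_map.mpr (h.mono fun _ hr => add_le_add_left hr.2 c)⟩
  have hcb2 : IsCoboundedUnder (· ≤ ·) (𝓝[>] (0:ℝ)) fun r => u r + c :=
    IsBoundedUnder.isCoboundedUnder_flip
      ⟨0 + c, eventually_map.mpr (h.mono fun _ hr => by simpa using add_le_add_right hr.1 c)⟩
  have := (OrderIso.addRight c).limsup_apply (f := 𝓝[>] (0:ℝ)) (u := u) hb hcb
    (by simpa using hb2) (by simpa using hcb2)
  simpa using this.symm

lemma my_liminf_le_add (hu : ∀ᶠ r in 𝓝[>] (0:ℝ), u r ∈ Icc 0 K1)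
    (hv : ∀ᶠ r in 𝓝[>] (0:ℝ), v r ∈ Icc 0 K2)
    (h : ∀ᶠ r in 𝓝[>] (0:ℝ), u r ≤ v r + c) :
    liminf u (𝓝[>] (0:ℝ)) ≤ liminf v (𝓝[>] (0:ℝ)) + c := by
  rw [← my_liminf_add_const v c hv]
  refine liminf_le_liminf h (ev_bddBelow hu) ?_
  exact IsBoundedUnder.isCoboundedUnder_flip
    ⟨K2 + c, eventually_map.mpr (hv.mono fun _ hr => add_le_add_left hr.2 c)⟩

lemma my_limsup_le_add (hu : ∀ᶠ r in 𝓝[>] (0:ℝ), u r ∈ Icc 0 K1)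
    (hv : ∀ᶠ r in 𝓝[>] (0:ℝ), v r ∈ Icc 0 K2)
    (h : ∀ᶠ r in 𝓝[>] (0:ℝ), u r ≤ v r + c) :
    limsup u (𝓝[>] (0:ℝ)) ≤ limsup v (𝓝[>] (0:ℝ)) + c := by
  rw [← my_limsup_add_const v c hv]
  refine limsup_le_limsup h ?_ ?_
  · exact (ev_bddBelow hu).isCoboundedUnder_flip
  · exact ⟨K2 + c, eventually_map.mpr (hv.mono fun _ hr => add_le_add_left hr.2 c)⟩

lemma my_liminf_le_add' (hu : ∀ᶠ r in 𝓝[>] (0:ℝ), u r ∈ Icc 0 K1)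
    (hv : ∀ᶠ r in 𝓝[>] (0:ℝ), v r ∈ Icc 0 K2)
    (hw : Tendsto w (𝓝[>] (0:ℝ)) (𝓝 0))
    (h : ∀ᶠ r in 𝓝[>] (0:ℝ), u r ≤ v r + c + w r) :
    liminf u (𝓝[>] (0:ℝ)) ≤ liminf v (𝓝[>] (0:ℝ)) + c := by
  refine le_of_forall_pos_le_add fun δ hδ => ?_
  have hwev : ∀ᶠ r in 𝓝[>] (0:ℝ), w r ≤ δ := hw.eventually (eventually_le_nhds hδ)
  have h2 : ∀ᶠ r in 𝓝[>] (0:ℝ), u r ≤ v r + (c + δ) := by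
    filter_upwards [h, hwev] with r h1 h2; linarith
  have := my_liminf_le_add hu hv h2
  linarith

lemma my_limsup_le_add' (hu : ∀ᶠ r in 𝓝[>] (0:ℝ), u r ∈ Icc 0 K1)
    (hv : ∀ᶠ r in 𝓝[>] (0:ℝ), v r ∈ Icc 0 K2)
    (hw : Tendsto w (𝓝[>] (0:ℝ)) (𝓝 0))
    (h : ∀ᶠ r in 𝓝[>] (0:ℝ), u r ≤ v r + c + w r) :
    limsup u (𝓝[>] (0:ℝ)) ≤ limsup v (𝓝[>] (0:ℝ)) + c := by
  refine le_of_forall_pos_le_add fun δ hδ => ?_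
  have hwev : ∀ᶠ r in 𝓝[>] (0:ℝ), w r ≤ δ := hw.eventually (eventually_le_nhds hδ)
  have h2 : ∀ᶠ r in 𝓝[>] (0:ℝ), u r ≤ v r + (c + δ) := by
    filter_upwards [h, hwev] with r h1 h2; linarith
  have := my_limsup_le_add hu hv h2
  linarith

lemma my_liminf_nonneg (hu : ∀ᶠ r in 𝓝[>] (0:ℝ), u r ∈ Icc 0 K1) :
    0 ≤ liminf u (𝓝[>] (0:ℝ)) :=
  le_liminf_of_le ((ev_bddAbove hu).isCoboundedUnder_flip) (hu.mono fun _ hr => hr.1)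

lemma my_limsup_nonneg (hu : ∀ᶠ r in 𝓝[>] (0:ℝ), u r ∈ Icc 0 K1) :
    0 ≤ limsup u (𝓝[>] (0:ℝ)) :=
  le_limsup_of_frequently_le ((hu.mono fun _ hr => hr.1).frequently) (ev_bddAbove hu)

lemma my_liminf_le_of_tendsto (hu : ∀ᶠ r in 𝓝[>] (0:ℝ), u r ∈ Icc 0 K1)
    (h : ∀ᶠ r in 𝓝[>] (0:ℝ), u r ≤ w r) (hw : Tendsto w (𝓝[>] (0:ℝ)) (𝓝 L)) :
    liminf u (𝓝[>] (0:ℝ)) ≤ L := by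
  rw [← hw.liminf_eq]
  exact liminf_le_liminf h (ev_bddBelow hu) hw.isBoundedUnder_le.isCoboundedUnder_flip

lemma my_limsup_le_of_tendsto (hu : ∀ᶠ r in 𝓝[>] (0:ℝ), u r ∈ Icc 0 K1)
    (h : ∀ᶠ r in 𝓝[>] (0:ℝ), u r ≤ w r) (hw : Tendsto w (𝓝[>] (0:ℝ)) (𝓝 L)) :
    limsup u (𝓝[>] (0:ℝ)) ≤ L := by
  rw [← hw.limsup_eq]
  exact limsup_le_limsup h (ev_bddBelow hu).isCoboundedUnder_flip hw.isBoundedUnder_le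

end LiminfHelpers

section Profiles

variable (hE : E.Nonempty) (hEc : IsCompact E) (hθ0 : 0 < θ) (hθ1 : θ ≤ 1)

include hE hEc hθ0 hθ1

lemma LF_nonneg (hs : 0 ≤ s) (hst : s ≤ t) :
    0 ≤ liminf (capRatio d E θ s t) (𝓝[>] (0:ℝ)) :=
  my_liminf_nonneg (ratio_ev_mem hE hEc hθ0 hθ1 hs hst)

lemma UF_nonneg (hs : 0 ≤ s) (hst : s ≤ t) :
    0 ≤ limsup (capRatio d E θ s t) (𝓝[>] (0:ℝ)) :=
  my_limsup_nonneg (ratio_ev_mem hE hEc hθ0 hθ1 hs hst)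

lemma LF_le (hs : 0 ≤ s) (hst : s ≤ t) :
    liminf (capRatio d E θ s t) (𝓝[>] (0:ℝ)) ≤ θ*(t-s)+s := by
  refine my_liminf_le_of_tendsto (ratio_ev_mem hE hEc hθ0 hθ1 hs hst)
    (?_ : ∀ᶠ r in 𝓝[>] (0:ℝ), _ ≤ θ*(t-s)+s + t * Real.log (Mdiam E) / (-Real.log r)) ?_
  · filter_upwards [Ioo_mem_nhdsGT_of_mem (⟨le_refl 0, one_pos⟩ : (0:ℝ) ∈ Ico (0:ℝ) 1)]
      with r hr
    exact capRatio_le hE hEc hr.1 hr.2 hθ0 hθ1 hs hst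
  · simpa using tendsto_const_nhds.add (tendsto_aux (t * Real.log (Mdiam E)))

lemma UF_le (hs : 0 ≤ s) (hst : s ≤ t) :
    limsup (capRatio d E θ s t) (𝓝[>] (0:ℝ)) ≤ θ*(t-s)+s := by
  refine my_limsup_le_of_tendsto (ratio_ev_mem hE hEc hθ0 hθ1 hs hst)
    (?_ : ∀ᶠ r in 𝓝[>] (0:ℝ), _ ≤ θ*(t-s)+s + t * Real.log (Mdiam E) / (-Real.log r)) ?_
  · filter_upwards [Ioo_mem_nhdsGT_of_mem (⟨le_refl 0, one_pos⟩ : (0:ℝ) ∈ Ico (0:ℝ) 1)]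
      with r hr
    exact capRatio_le hE hEc hr.1 hr.2 hθ0 hθ1 hs hst
  · simpa using tendsto_const_nhds.add (tendsto_aux (t * Real.log (Mdiam E)))

lemma LF_mono_s (hs : 0 ≤ s) (hss' : s ≤ s') (hs't : s' ≤ t) :
    liminf (capRatio d E θ s t) (𝓝[>] (0:ℝ))
      ≤ liminf (capRatio d E θ s' t) (𝓝[>] (0:ℝ)) := by
  have := my_liminf_le_add (c := 0) (ratio_ev_mem hE hEc hθ0 hθ1 hs (hss'.trans hs't))
    (ratio_ev_mem hE hEc hθ0 hθ1 (hs.trans hss') hs't) ?_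
  · simpa using this
  · filter_upwards [Ioo_mem_nhdsGT_of_mem (⟨le_refl 0, one_pos⟩ : (0:ℝ) ∈ Ico (0:ℝ) 1)]
      with r hr
    simpa using ratio_mono_s hE hEc hr.1 hr.2 hθ0 hθ1 hs hss' hs't

lemma UF_mono_s (hs : 0 ≤ s) (hss' : s ≤ s') (hs't : s' ≤ t) :
    limsup (capRatio d E θ s t) (𝓝[>] (0:ℝ))
      ≤ limsup (capRatio d E θ s' t) (𝓝[>] (0:ℝ)) := by
  have := my_limsup_le_add (c := 0) (ratio_ev_mem hE hEc hθ0 hθ1 hs (hss'.trans hs't))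
    (ratio_ev_mem hE hEc hθ0 hθ1 (hs.trans hss') hs't) ?_
  · simpa using this
  · filter_upwards [Ioo_mem_nhdsGT_of_mem (⟨le_refl 0, one_pos⟩ : (0:ℝ) ∈ Ico (0:ℝ) 1)]
      with r hr
    simpa using ratio_mono_s hE hEc hr.1 hr.2 hθ0 hθ1 hs hss' hs't

lemma LF_lip_s (hs : 0 ≤ s) (hss' : s ≤ s') (hs't : s' ≤ t) :
    liminf (capRatio d E θ s' t) (𝓝[>] (0:ℝ))
      ≤ liminf (capRatio d E θ s t) (𝓝[>] (0:ℝ)) + (1-θ)*(s'-s) := by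
  refine my_liminf_le_add (ratio_ev_mem hE hEc hθ0 hθ1 (hs.trans hss') hs't)
    (ratio_ev_mem hE hEc hθ0 hθ1 hs (hss'.trans hs't)) ?_
  filter_upwards [Ioo_mem_nhdsGT_of_mem (⟨le_refl 0, one_pos⟩ : (0:ℝ) ∈ Ico (0:ℝ) 1)]
    with r hr
  exact ratio_lip_s hE hEc hr.1 hr.2 hθ0 hθ1 hs hss' hs't

lemma UF_lip_s (hs : 0 ≤ s) (hss' : s ≤ s') (hs't : s' ≤ t) :
    limsup (capRatio d E θ s' t) (𝓝[>] (0:ℝ))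
      ≤ limsup (capRatio d E θ s t) (𝓝[>] (0:ℝ)) + (1-θ)*(s'-s) := by
  refine my_limsup_le_add (ratio_ev_mem hE hEc hθ0 hθ1 (hs.trans hss') hs't)
    (ratio_ev_mem hE hEc hθ0 hθ1 hs (hss'.trans hs't)) ?_
  filter_upwards [Ioo_mem_nhdsGT_of_mem (⟨le_refl 0, one_pos⟩ : (0:ℝ) ∈ Ico (0:ℝ) 1)]
    with r hr
  exact ratio_lip_s hE hEc hr.1 hr.2 hθ0 hθ1 hs hss' hs't

lemma LF_mono_t (hs : 0 ≤ s) (hst : s ≤ t) (htt' : t ≤ t') :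
    liminf (capRatio d E θ s t) (𝓝[>] (0:ℝ))
      ≤ liminf (capRatio d E θ s t') (𝓝[>] (0:ℝ)) := by
  have := my_liminf_le_add (c := 0) (ratio_ev_mem hE hEc hθ0 hθ1 hs hst)
    (ratio_ev_mem hE hEc hθ0 hθ1 hs (hst.trans htt')) ?_
  · simpa using this
  · filter_upwards [Ioo_mem_nhdsGT_of_mem (⟨le_refl 0, one_pos⟩ : (0:ℝ) ∈ Ico (0:ℝ) 1)]
      with r hr
    simpa using ratio_mono_t hE hEc hr.1 hr.2 hθ0 hθ1 hs hst htt'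

lemma UF_mono_t (hs : 0 ≤ s) (hst : s ≤ t) (htt' : t ≤ t') :
    limsup (capRatio d E θ s t) (𝓝[>] (0:ℝ))
      ≤ limsup (capRatio d E θ s t') (𝓝[>] (0:ℝ)) := by
  have := my_limsup_le_add (c := 0) (ratio_ev_mem hE hEc hθ0 hθ1 hs hst)
    (ratio_ev_mem hE hEc hθ0 hθ1 hs (hst.trans htt')) ?_
  · simpa using this
  · filter_upwards [Ioo_mem_nhdsGT_of_mem (⟨le_refl 0, one_pos⟩ : (0:ℝ) ∈ Ico (0:ℝ) 1)]
      with r hr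
    simpa using ratio_mono_t hE hEc hr.1 hr.2 hθ0 hθ1 hs hst htt'

lemma LF_lip_t (hs : 0 ≤ s) (hst : s ≤ t) (htt' : t ≤ t') :
    liminf (capRatio d E θ s t') (𝓝[>] (0:ℝ))
      ≤ liminf (capRatio d E θ s t) (𝓝[>] (0:ℝ)) + θ*(t'-t) := by
  refine my_liminf_le_add' (ratio_ev_mem hE hEc hθ0 hθ1 hs (hst.trans htt'))
    (ratio_ev_mem hE hEc hθ0 hθ1 hs hst)
    (tendsto_aux ((t'-t) * Real.log (Mdiam E))) ?_
  filter_upwards [Ioo_mem_nhdsGT_of_mem (⟨le_refl 0, one_pos⟩ : (0:ℝ) ∈ Ico (0:ℝ) 1)]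
    with r hr
  exact ratio_lip_t hE hEc hr.1 hr.2 hθ0 hθ1 hs hst htt'

lemma UF_lip_t (hs : 0 ≤ s) (hst : s ≤ t) (htt' : t ≤ t') :
    limsup (capRatio d E θ s t') (𝓝[>] (0:ℝ))
      ≤ limsup (capRatio d E θ s t) (𝓝[>] (0:ℝ)) + θ*(t'-t) := by
  refine my_limsup_le_add' (ratio_ev_mem hE hEc hθ0 hθ1 hs (hst.trans htt'))
    (ratio_ev_mem hE hEc hθ0 hθ1 hs hst)
    (tendsto_aux ((t'-t) * Real.log (Mdiam E))) ?_
  filter_upwards [Ioo_mem_nhdsGT_of_mem (⟨le_refl 0, one_pos⟩ : (0:ℝ) ∈ Ico (0:ℝ) 1)]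
    with r hr
  exact ratio_lip_t hE hEc hr.1 hr.2 hθ0 hθ1 hs hst htt'

end Profiles

lemma exists_fixed_abstract (h : ℝ → ℝ) {θ t : ℝ} (hθ0 : 0 < θ) (ht : 0 < t)
    (h0 : 0 ≤ h 0) (hT : h t ≤ t)
    (hmono : ∀ a b, 0 ≤ a → a ≤ b → b ≤ t → h a ≤ h b)
    (hlip : ∀ a b, 0 ≤ a → a ≤ b → b ≤ t → h b ≤ h a + (1-θ)*(b-a)) :
    ∃ s, s ∈ Icc (0:ℝ) t ∧ h s = s := by
  have hθ1' : 1 - θ < 1 := by linarith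
  have hcont : ContinuousOn (fun s => h s - s) (Icc 0 t) := by
    have hlip1 : LipschitzOnWith 1 (fun s => h s - s) (Icc 0 t) := by
      refine LipschitzOnWith.of_dist_le_mul fun a ha b hb => ?_
      simp only [NNReal.coe_one, one_mul, Real.dist_eq]
      rcases le_total a b with hab | hab
      · have h1 := hmono a b ha.1 hab hb.2
        have h2 := hlip a b ha.1 hab hb.2
        rw [abs_sub_comm (a := a) (b := b), abs_of_nonneg (by linarith : (0:ℝ) ≤ b - a),
          abs_le]
        constructor <;> nlinarith
      · have h1 := hmono b a hb.1 hab ha.2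
        have h2 := hlip b a hb.1 hab ha.2
        rw [abs_of_nonneg (by linarith : (0:ℝ) ≤ a - b), abs_le]
        constructor <;> nlinarith
    exact hlip1.continuousOn
  have hmem : (0:ℝ) ∈ Icc ((fun s => h s - s) t) ((fun s => h s - s) 0) :=
    ⟨by simpa using hT, by simpa using h0⟩
  obtain ⟨s₀, hs₀, hfix⟩ := intermediate_value_Icc' ht.le hcont hmem
  exact ⟨s₀, hs₀, by simp only at hfix; linarith [hfix]⟩

lemma exists_fixed_liminf (hE : E.Nonempty) (hEc : IsCompact E) (hθ0 : 0 < θ)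
    (hθ1 : θ ≤ 1) (ht : 0 < t) :
    ∃ s, s ∈ Icc (0:ℝ) t ∧ liminf (capRatio d E θ s t) (𝓝[>] (0:ℝ)) = s := by
  refine exists_fixed_abstract (fun s => liminf (capRatio d E θ s t) (𝓝[>] (0:ℝ)))
    hθ0 ht (LF_nonneg hE hEc hθ0 hθ1 le_rfl ht.le) ?_
    (fun a b ha hab hbt => LF_mono_s hE hEc hθ0 hθ1 ha hab hbt)
    (fun a b ha hab hbt => LF_lip_s hE hEc hθ0 hθ1 ha hab hbt)
  have := LF_le hE hEc hθ0 hθ1 ht.le (le_refl t)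
  simpa using this

lemma exists_fixed_limsup (hE : E.Nonempty) (hEc : IsCompact E) (hθ0 : 0 < θ)
    (hθ1 : θ ≤ 1) (ht : 0 < t) :
    ∃ s, s ∈ Icc (0:ℝ) t ∧ limsup (capRatio d E θ s t) (𝓝[>] (0:ℝ)) = s := by
  refine exists_fixed_abstract (fun s => limsup (capRatio d E θ s t) (𝓝[>] (0:ℝ)))
    hθ0 ht (UF_nonneg hE hEc hθ0 hθ1 le_rfl ht.le) ?_
    (fun a b ha hab hbt => UF_mono_s hE hEc hθ0 hθ1 ha hab hbt)
    (fun a b ha hab hbt => UF_lip_s hE hEc hθ0 hθ1 ha hab hbt)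
  have := UF_le hE hEc hθ0 hθ1 ht.le (le_refl t)
  simpa using this

lemma fixed_cmp_abstract {θ t t' a b : ℝ} (hθ0 : 0 < θ)
    (h h' : ℝ → ℝ) (htt' : t ≤ t')
    (ha : a ∈ Icc (0:ℝ) t) (hfa : h a = a) (hb : b ∈ Icc (0:ℝ) t') (hfb : h' b = b)
    (hmono_t : ∀ s, 0 ≤ s → s ≤ t → h s ≤ h' s)
    (hlip_t : ∀ s, 0 ≤ s → s ≤ t → h' s ≤ h s + θ*(t'-t))
    (hlip' : ∀ x y, 0 ≤ x → x ≤ y → y ≤ t' → h' y ≤ h' x + (1-θ)*(y-x)) :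
    a ≤ b ∧ b - a ≤ t' - t := by
  have hab : a ≤ b := by
    by_contra hc
    push_neg at hc
    have h1 : h a ≤ h' a := hmono_t a ha.1 ha.2
    rw [hfa] at h1
    have h2 : h' a ≤ h' b + (1-θ)*(a-b) := hlip' b a hb.1 hc.le (ha.2.trans htt')
    rw [hfb] at h2
    nlinarith
  refine ⟨hab, ?_⟩
  have h1 : h' b ≤ h' a + (1-θ)*(b-a) := hlip' a b ha.1 hab hb.2
  have h2 : h' a ≤ h a + θ*(t'-t) := hlip_t a ha.1 ha.2
  rw [hfb] at h1
  rw [hfa] at h2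
  nlinarith

end PLip

/-- On `(0,d)` the maps `t ↦ dim_θ^t E` and `t ↦ dim̄_θ^t E` are
Lipschitz with constant `1`. -/
theorem profiles_lipschitz {d : ℕ} (E : Set (EuclideanSpace ℝ (Fin d)))
    (hE : E.Nonempty) (hEc : IsCompact E)
    (θ : ℝ) (hθ : θ ∈ Ioc (0 : ℝ) 1) :
    ∀ s ∈ Ioo (0 : ℝ) (d : ℝ), ∀ t ∈ Ioo (0 : ℝ) (d : ℝ),
      |lowerProfile d θ t E - lowerProfile d θ s E| ≤ |t - s| ∧
      |upperProfile d θ t E - upperProfile d θ s E| ≤ |t - s| := by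
  obtain ⟨hθ0, hθ1⟩ := hθ
  have key : ∀ t1 t2 : ℝ, 0 < t1 → t1 ≤ t2 →
      |lowerProfile d θ t2 E - lowerProfile d θ t1 E| ≤ t2 - t1 ∧
      |upperProfile d θ t2 E - upperProfile d θ t1 E| ≤ t2 - t1 := by
    intro t1 t2 ht1 h12
    have ht2 : 0 < t2 := lt_of_lt_of_le ht1 h12
    have e1 : lowerProfile d θ t1 E ∈ Icc (0:ℝ) t1 ∧
        liminf (capRatio d E θ (lowerProfile d θ t1 E) t1) (𝓝[>] (0:ℝ))
          = lowerProfile d θ t1 E :=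
      Classical.epsilon_spec (PLip.exists_fixed_liminf hE hEc hθ0 hθ1 ht1)
    have e2 : lowerProfile d θ t2 E ∈ Icc (0:ℝ) t2 ∧
        liminf (capRatio d E θ (lowerProfile d θ t2 E) t2) (𝓝[>] (0:ℝ))
          = lowerProfile d θ t2 E :=
      Classical.epsilon_spec (PLip.exists_fixed_liminf hE hEc hθ0 hθ1 ht2)
    have e3 : upperProfile d θ t1 E ∈ Icc (0:ℝ) t1 ∧
        limsup (capRatio d E θ (upperProfile d θ t1 E) t1) (𝓝[>] (0:ℝ))
          = upperProfile d θ t1 E :=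
      Classical.epsilon_spec (PLip.exists_fixed_limsup hE hEc hθ0 hθ1 ht1)
    have e4 : upperProfile d θ t2 E ∈ Icc (0:ℝ) t2 ∧
        limsup (capRatio d E θ (upperProfile d θ t2 E) t2) (𝓝[>] (0:ℝ))
          = upperProfile d θ t2 E :=
      Classical.epsilon_spec (PLip.exists_fixed_limsup hE hEc hθ0 hθ1 ht2)
    have c1 := PLip.fixed_cmp_abstract hθ0
      (fun s => liminf (capRatio d E θ s t1) (𝓝[>] (0:ℝ)))
      (fun s => liminf (capRatio d E θ s t2) (𝓝[>] (0:ℝ))) h12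
      e1.1 e1.2 e2.1 e2.2
      (fun s hs hst => PLip.LF_mono_t hE hEc hθ0 hθ1 hs hst h12)
      (fun s hs hst => PLip.LF_lip_t hE hEc hθ0 hθ1 hs hst h12)
      (fun x y hx hxy hyt => PLip.LF_lip_s hE hEc hθ0 hθ1 hx hxy hyt)
    have c2 := PLip.fixed_cmp_abstract hθ0
      (fun s => limsup (capRatio d E θ s t1) (𝓝[>] (0:ℝ)))
      (fun s => limsup (capRatio d E θ s t2) (𝓝[>] (0:ℝ))) h12
      e3.1 e3.2 e4.1 e4.2
      (fun s hs hst => PLip.UF_mono_t hE hEc hθ0 hθ1 hs hst h12)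
      (fun s hs hst => PLip.UF_lip_t hE hEc hθ0 hθ1 hs hst h12)
      (fun x y hx hxy hyt => PLip.UF_lip_s hE hEc hθ0 hθ1 hx hxy hyt)
    constructor
    · rw [abs_of_nonneg (by linarith [c1.1] : (0:ℝ) ≤ lowerProfile d θ t2 E - lowerProfile d θ t1 E)]
      exact c1.2
    · rw [abs_of_nonneg (by linarith [c2.1] : (0:ℝ) ≤ upperProfile d θ t2 E - upperProfile d θ t1 E)]
      exact c2.2
  intro s hs t ht
  rcases le_total s t with h | h
  · have hk := key s t hs.1 h
    rw [abs_of_nonneg (by linarith : (0:ℝ) ≤ t - s)]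
    exact hk
  · have hk := key t s ht.1 h
    rw [abs_sub_comm (lowerProfile d θ t E), abs_sub_comm (upperProfile d θ t E),
      abs_sub_comm t s, abs_of_nonneg (by linarith : (0:ℝ) ≤ s - t)]
    exact hk
end
end
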